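/- arXiv:0911.0735 — 6 statements merged into one kernel-verified Lean document; each statement's English description precedes it below -/
import Mathlib

section
/- For every index 1 ≤ ℓ ≤ m, the following identity holds in the group algebra ℚ[L]: σ(∏_{β∈Δ1+∖{δ−ε_ℓ}}(1 + e^{−β})) = e^{2ρ_1 − δ − ε_ℓ} · ∏_{β∈Δ1+∖{δ+ε_ℓ}}(1 + e^{−β}), where σ acts on ℚ[L] as the algebra automorphism e^μ ↦ e^{σ(μ)}. -/
/-!
Identity (4.7) of Su–Zhang: for `1 ≤ ℓ ≤ m`,
`σ(∏_{β ∈ Δ₁⁺∖{δ-ε_ℓ}} (1+e^{-β})) = e^{2ρ₁-δ-ε_ℓ} ∏_{β ∈ Δ₁⁺∖{δ+ε_ℓ}} (1+e^{-β})`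
in the group algebra, where `σ(δ) = -δ`, `σ(ε_i) = ε_i`.
Here `k = 2m` when `par = false` and `k = 2m+1` when `par = true`.
-/

open Finset

noncomputable section

abbrev Wt (m : ℕ) := ℚ × (Fin m → ℚ)

abbrev GA (m : ℕ) := AddMonoidAlgebra ℚ (Wt m)

/-- The formal exponential `e^v`. -/
def e {m : ℕ} (v : Wt m) : GA m := AddMonoidAlgebra.single v 1

def deltaW (m : ℕ) : Wt m := (1, 0)

def epsW {m : ℕ} (i : Fin m) : Wt m := (0, Pi.single i 1)

/-- The set of positive odd roots `Δ₁⁺`; `par = true` for `k = 2m+1`. -/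
def Delta1 (m : ℕ) (par : Bool) : Finset (Wt m) :=
  (Finset.univ.image fun i : Fin m => deltaW m + epsW i) ∪
    (Finset.univ.image fun i : Fin m => deltaW m - epsW i) ∪
    (if par then {deltaW m} else ∅)

/-- Half sum of the positive odd roots, `ρ₁ = (m+1-s)δ`. -/
def rho1 (m : ℕ) (par : Bool) : Wt m := (2⁻¹ : ℚ) • (Delta1 m par).sum id

/-- The automorphism `σ` of the weight lattice: `σ(δ) = -δ`, `σ(ε_i) = ε_i`. -/
def sigmaMap (m : ℕ) (v : Wt m) : Wt m := (-v.1, v.2)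

/-- The algebra map of the group algebra induced by `f`: `e^μ ↦ e^{f μ}`. -/
def gmap {m : ℕ} (f : Wt m → Wt m) (x : GA m) : GA m := AddMonoidAlgebra.mapDomain f x

/-! ### Auxiliary material -/

/-- The involution `τ = -σ`: `τ(δ) = δ`, `τ(ε_i) = -ε_i`. -/
def tauMap (m : ℕ) (v : Wt m) : Wt m := (v.1, -v.2)

lemma tau_invol {m : ℕ} (v : Wt m) : tauMap m (tauMap m v) = v := by
  simp [tauMap]

lemma tau_inj {m : ℕ} : Function.Injective (tauMap m) :=
  Function.LeftInverse.injective tau_invol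

lemma sigma_neg {m : ℕ} (v : Wt m) : sigmaMap m (-v) = tauMap m v := by
  simp [sigmaMap, tauMap]

/-- `σ` as an additive monoid hom. -/
def sigmaHom (m : ℕ) : Wt m →+ Wt m where
  toFun := sigmaMap m
  map_zero' := by simp [sigmaMap]
  map_add' a b := by simp [sigmaMap, Prod.ext_iff]; ring

lemma e_add {m : ℕ} (u v : Wt m) : e u * e v = e (u + v) := by
  simp [e, AddMonoidAlgebra.single_mul_single]

lemma e_zero {m : ℕ} : e (0 : Wt m) = 1 := rfl

lemma e_sum {m : ℕ} {ι : Type*} (s : Finset ι) (f : ι → Wt m) :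
    (∏ b ∈ s, e (f b)) = e (∑ b ∈ s, f b) := by
  induction s using Finset.cons_induction with
  | empty => simp [e_zero]
  | cons a s h ih => rw [Finset.prod_cons, Finset.sum_cons, ih, e_add]

lemma gmap_e {m : ℕ} (f : Wt m → Wt m) (v : Wt m) : gmap f (e v) = e (f v) :=
  AddMonoidAlgebra.mapDomain_single

lemma gmap_one {m : ℕ} : gmap (sigmaMap m) (1 : GA m) = 1 :=
  AddMonoidAlgebra.mapDomain_one (sigmaHom m)

lemma gmap_mul {m : ℕ} (x y : GA m) :
    gmap (sigmaMap m) (x * y) = gmap (sigmaMap m) x * gmap (sigmaMap m) y :=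
  AddMonoidAlgebra.mapDomain_mul (sigmaHom m) x y

lemma gmap_add {m : ℕ} (x y : GA m) :
    gmap (sigmaMap m) (x + y) = gmap (sigmaMap m) x + gmap (sigmaMap m) y :=
  AddMonoidAlgebra.mapDomain_add _ x y

lemma gmap_prod {m : ℕ} {ι : Type*} (s : Finset ι) (f : ι → GA m) :
    gmap (sigmaMap m) (∏ b ∈ s, f b) = ∏ b ∈ s, gmap (sigmaMap m) (f b) := by
  induction s using Finset.cons_induction with
  | empty => simpa using gmap_one
  | cons a s h ih => rw [Finset.prod_cons, Finset.prod_cons, gmap_mul, ih]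

lemma one_add_e {m : ℕ} (v : Wt m) : 1 + e v = e v * (1 + e (-v)) := by
  rw [mul_add, mul_one, e_add, add_neg_cancel, e_zero, add_comm]

lemma tau_dpe {m : ℕ} (i : Fin m) : tauMap m (deltaW m + epsW i) = deltaW m - epsW i := by
  simp [tauMap, deltaW, epsW, Prod.ext_iff, sub_eq_add_neg]

lemma tau_dme {m : ℕ} (i : Fin m) : tauMap m (deltaW m - epsW i) = deltaW m + epsW i := by
  simp [tauMap, deltaW, epsW, Prod.ext_iff, sub_eq_add_neg]

lemma tau_d {m : ℕ} : tauMap m (deltaW m) = deltaW m := by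
  simp [tauMap, deltaW, Prod.ext_iff]

lemma tau_image_Delta1 {m : ℕ} (par : Bool) :
    (Delta1 m par).image (tauMap m) = Delta1 m par := by
  unfold Delta1
  simp only [Finset.image_union, Finset.image_image]
  have h1 : (tauMap m ∘ fun i : Fin m => deltaW m + epsW i) = fun i => deltaW m - epsW i :=
    funext fun i => tau_dpe i
  have h2 : (tauMap m ∘ fun i : Fin m => deltaW m - epsW i) = fun i => deltaW m + epsW i :=
    funext fun i => tau_dme i
  have h3 : ((if par then ({deltaW m} : Finset (Wt m)) else ∅)).image (tauMap m)
      = (if par then ({deltaW m} : Finset (Wt m)) else ∅) := by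
    cases par <;> simp [tau_d]
  rw [h1, h2, h3, Finset.union_comm (Finset.univ.image fun i : Fin m => deltaW m - epsW i)]

lemma mem_dpe {m : ℕ} (par : Bool) (l : Fin m) : deltaW m + epsW l ∈ Delta1 m par := by
  unfold Delta1
  refine Finset.mem_union_left _ (Finset.mem_union_left _ ?_)
  exact Finset.mem_image.2 ⟨l, Finset.mem_univ l, rfl⟩

lemma mem_dme {m : ℕ} (par : Bool) (l : Fin m) : deltaW m - epsW l ∈ Delta1 m par := by
  unfold Delta1
  refine Finset.mem_union_left _ (Finset.mem_union_right _ ?_)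
  exact Finset.mem_image.2 ⟨l, Finset.mem_univ l, rfl⟩

/-- `σ(∏_{β∈Δ₁⁺∖{δ−ε_ℓ}}(1 + e^{−β}))
  = e^{2ρ₁ − δ − ε_ℓ} ⬝ ∏_{β∈Δ₁⁺∖{δ+ε_ℓ}}(1 + e^{−β})`. -/
theorem sigma_odd_product_identity (m : ℕ) (hm : 2 ≤ m) (par : Bool) (l : Fin m) :
    gmap (sigmaMap m)
        (∏ β ∈ (Delta1 m par).erase (deltaW m - epsW l), (1 + e (-β))) =
      e ((2 : ℚ) • rho1 m par - deltaW m - epsW l) *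
        ∏ β ∈ (Delta1 m par).erase (deltaW m + epsW l), (1 + e (-β)) := by
  classical
  set S := (Delta1 m par).erase (deltaW m - epsW l) with hS
  -- the image of S under τ
  have himg : S.image (tauMap m) = (Delta1 m par).erase (deltaW m + epsW l) := by
    rw [hS, Finset.image_erase tau_inj, tau_image_Delta1, tau_dme]
  -- push σ through the product
  rw [gmap_prod]
  have hfac : ∀ β ∈ S, gmap (sigmaMap m) (1 + e (-β))
      = e (tauMap m β) * (1 + e (-(tauMap m β))) := by
    intro β _
    rw [gmap_add, gmap_one, gmap_e, sigma_neg, one_add_e]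
  rw [Finset.prod_congr rfl hfac, Finset.prod_mul_distrib, e_sum]
  -- reindex both the sum and the product via τ
  have hsum : ∑ β ∈ S, tauMap m β = ∑ γ ∈ S.image (tauMap m), γ :=
    (Finset.sum_image (f := (id : Wt m → Wt m)) fun x _ y _ h => tau_inj h).symm
  have hprod : (∏ β ∈ S, (1 + e (-(tauMap m β))))
      = ∏ γ ∈ S.image (tauMap m), (1 + e (-γ)) :=
    (Finset.prod_image (f := fun γ => 1 + e (-γ)) fun x _ y _ h => tau_inj h).symm
  rw [hsum, hprod, himg]
  congr 1
  congr 1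
  -- the exponent computation
  rw [Finset.sum_erase_eq_sub (f := fun γ : Wt m => γ) (mem_dpe par l)]
  have h2ρ : (∑ γ ∈ Delta1 m par, γ) = (2 : ℚ) • rho1 m par := by
    rw [rho1, smul_smul]
    norm_num
  rw [h2ρ, sub_sub]
end
end

section
/- Let S be a set of m−1 distinct positive half-integers (elements of 1/2 + ℤ≥0). Then the map λ ↦ λ̃_0 is a bijection from the set of integral g_0-dominant atypical weights with atypicality type S onto the set {t ∈ 1/2 + ℤ : |t| ∉ S}. (This is the classification P^{0+}_{λ̄} = {λ^{(i)} : i ∈ ℤ} of Lemma 3.7(1) in the case k = 2m+1.) -/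
/-!
Combinatorics of weights for the orthosymplectic Lie superalgebra
`osp_{2m+1|2} = B(m,1)` (so `k = 2m+1`, `s = 1/2`), with its distinguished
Borel subalgebra.  A weight is a tuple `λ = (λ₀ | λ₁, …, λ_m) ∈ ℚ^{m+1}`,
encoded as `ℚ × (Fin m → ℚ)` (the index `i : Fin m` stands for the coordinate
`λ_{i+1}`).
-/

open Finset

noncomputable section

/-- The ρ-translated weight `λ̃ = λ + ρ`, with
`ρ = (s−m | m−s, m−1−s, …, 1−s)` and `s = 1/2`. -/
def tilde (m : ℕ) (lam : Wt m) : Wt m :=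
  (lam.1 + 1 / 2 - m, fun i => lam.2 i + (m : ℚ) - 1 / 2 - ((i : ℕ) : ℚ))

/-- `λ` is integral: `λ₀ ∈ ℤ` and `λ₁, …, λ_m` all in `ℤ` or all in `1/2 + ℤ`. -/
def Integral (m : ℕ) (lam : Wt m) : Prop :=
  (∃ n : ℤ, lam.1 = (n : ℚ)) ∧
    ((∀ i, ∃ n : ℤ, lam.2 i = (n : ℚ)) ∨ ∀ i, ∃ n : ℤ, lam.2 i = (n : ℚ) + 1 / 2)

/-- `λ` is `g₀`-dominant: `λ₁ ≥ λ₂ ≥ … ≥ λ_m ≥ 0`. -/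
def G0Dom (m : ℕ) (lam : Wt m) : Prop :=
  (∀ i j : Fin m, i ≤ j → lam.2 j ≤ lam.2 i) ∧ ∀ i, 0 ≤ lam.2 i

/-- `λ` is atypical: `|λ̃₀| = λ̃_ℓ` for some `ℓ`. -/
def Atypical (m : ℕ) (lam : Wt m) : Prop :=
  ∃ l : Fin m, |(tilde m lam).1| = (tilde m lam).2 l

/-- The atypicality type `S(λ̄) = {λ̃_i : i ≠ ℓ}` of an atypical `g₀`-dominant
weight `λ` (where `λ̃_ℓ = |λ̃₀|`). -/
def atypType (m : ℕ) (lam : Wt m) : Finset ℚ :=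
  (Finset.univ.image fun i => (tilde m lam).2 i).erase |(tilde m lam).1|

/-- `λ` is `g`-dominant: it is integral, `g₀`-dominant, `λ₀ ∈ ℤ≥0`, and
`λ_j = 0` whenever `j > λ₀`. -/
def GDom (m : ℕ) (lam : Wt m) : Prop :=
  Integral m lam ∧ G0Dom m lam ∧ 0 ≤ lam.1 ∧
    ∀ i : Fin m, lam.1 < ((i : ℕ) : ℚ) + 1 → lam.2 i = 0

/-- `λ^σ = (−λ₀ + 2(m−s) | λ₁, …, λ_m)` with `s = 1/2`. -/
def sigmaW (m : ℕ) (lam : Wt m) : Wt m := (-lam.1 + 2 * (m : ℚ) - 1, lam.2)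

/-- `γ` is the atypical root of `λ`: `γ = δ + ε_ℓ` if `λ̃₀ = λ̃_ℓ`, and
`γ = δ − ε_ℓ` if `λ̃₀ = −λ̃_ℓ`. -/
def AtypRoot (m : ℕ) (lam γ : Wt m) : Prop :=
  ∃ l : Fin m,
    (γ = deltaW m + epsW l ∧ (tilde m lam).1 = (tilde m lam).2 l) ∨
      (γ = deltaW m - epsW l ∧ (tilde m lam).1 = -(tilde m lam).2 l)

/-- `λ` is regular: `|λ̃₁|, …, |λ̃_m|` are pairwise distinct. -/
def Regular (m : ℕ) (lam : Wt m) : Prop :=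
  ∀ i j : Fin m, |(tilde m lam).2 i| = |(tilde m lam).2 j| → i = j

/-- Elements of the Weyl group `W₀` of type `B_m`: signed permutations
(`true` = change sign). -/
abbrev W0T (m : ℕ) := Equiv.Perm (Fin m) × (Fin m → Bool)

/-- The action of `w ∈ W₀` on ρ-translated weights: it fixes the coordinate
`λ̃₀` and signed-permutes `λ̃₁, …, λ̃_m`. -/
def tact (m : ℕ) (w : W0T m) (v : Wt m) : Wt m :=
  (v.1, fun i => (if w.2 i then (-1 : ℚ) else 1) * v.2 (w.1⁻¹ i))

/-- The signature of `w ∈ W₀`. -/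
def sgn (m : ℕ) (w : W0T m) : ℤ :=
  (Equiv.Perm.sign w.1 : ℤ) * ∏ i, (if w.2 i then (-1 : ℤ) else 1)

/-- `ν` is `W₀`-dot-conjugate to `λ`, i.e. `ν = w·λ = w(λ+ρ) − ρ` for some
`w ∈ W₀`. -/
def DotConj (m : ℕ) (lam nu : Wt m) : Prop :=
  ∃ w : W0T m, tilde m nu = tact m w (tilde m lam)

/-- `ν = λ⁺`: `ν` is the (unique) `g₀`-dominant `W₀`-dot-conjugate of `λ`. -/
def IsPlus (m : ℕ) (lam nu : Wt m) : Prop :=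
  G0Dom m nu ∧ DotConj m lam nu

/-- `ν = λˇ = (λ − a₋γ)⁺`, where `γ` is the atypical root of `λ` and `a₋` is
the smallest positive integer with `λ − a₋γ` regular. -/
def IsCheck (m : ℕ) (lam nu : Wt m) : Prop :=
  ∃ γ : Wt m, AtypRoot m lam γ ∧
    ∃ a : ℕ, 0 < a ∧ Regular m (lam - (a : ℚ) • γ) ∧
      (∀ b : ℕ, 0 < b → b < a → ¬Regular m (lam - (b : ℚ) • γ)) ∧
      IsPlus m (lam - (a : ℚ) • γ) nu

/-- `ν = λ^ = (λ + a₊γ)⁺`, where `γ` is the atypical root of `λ` and `a₊` is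
the smallest positive integer with `λ + a₊γ` regular. -/
def IsHat (m : ℕ) (lam nu : Wt m) : Prop :=
  ∃ γ : Wt m, AtypRoot m lam γ ∧
    ∃ a : ℕ, 0 < a ∧ Regular m (lam + (a : ℚ) • γ) ∧
      (∀ b : ℕ, 0 < b → b < a → ¬Regular m (lam + (b : ℚ) • γ)) ∧
      IsPlus m (lam + (a : ℚ) • γ) nu

/- Auxiliary lemmas -/

/-- Two half-integers with `b < a` satisfy `b + 1 ≤ a`. -/
lemma half_add_one_le {a b : ℚ} (ha : ∃ n : ℤ, a = (n : ℚ) + 1 / 2)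
    (hb : ∃ n : ℤ, b = (n : ℚ) + 1 / 2) (h : b < a) : b + 1 ≤ a := by
  obtain ⟨p, rfl⟩ := ha; obtain ⟨q, rfl⟩ := hb
  have h1 : (q : ℚ) < p := by linarith
  have h2 : q < p := by exact_mod_cast h1
  have h3 : (q : ℚ) + 1 ≤ p := by exact_mod_cast h2
  linarith

/-- Gap lemma for strictly decreasing half-integer valued functions. -/
lemma strictAnti_gap {m : ℕ} {f : Fin m → ℚ}
    (hf : StrictAnti f) (hhalf : ∀ i, ∃ n : ℤ, f i = (n : ℚ) + 1 / 2) :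
    ∀ d : ℕ, ∀ i j : Fin m, (j : ℕ) = (i : ℕ) + d → f j + (d : ℚ) ≤ f i := by
  intro d
  induction d with
  | zero =>
    intro i j h
    have : i = j := Fin.ext (by omega)
    simp [this]
  | succ d ih =>
    intro i j h
    have hj' : (i : ℕ) + d < m := by have := j.isLt; omega
    set j' : Fin m := ⟨(i : ℕ) + d, hj'⟩ with hj'def
    have hlt : j' < j := by
      simp only [Fin.lt_def, hj'def]
      omega
    have h1 : f j + 1 ≤ f j' := half_add_one_le (hhalf j') (hhalf j) (hf hlt)
    have h2 : f j' + (d : ℚ) ≤ f i := ih i j' rfl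
    push_cast
    linarith

/-- Two strictly decreasing functions `Fin m → ℚ` with the same image coincide. -/
lemma strictAnti_eq_of_image_eq {m : ℕ} {f g : Fin m → ℚ}
    (hf : StrictAnti f) (hg : StrictAnti g)
    (h : Finset.univ.image f = Finset.univ.image g) : f = g := by
  have hfm : StrictMono (f ∘ Fin.rev) := fun i j hij => hf (Fin.rev_lt_rev.mpr hij)
  have hgm : StrictMono (g ∘ Fin.rev) := fun i j hij => hg (Fin.rev_lt_rev.mpr hij)
  have hcard : (Finset.univ.image f).card = m := by
    rw [Finset.card_image_of_injective _ hf.injective, Finset.card_univ, Fintype.card_fin]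
  have h1 : f ∘ Fin.rev = (Finset.univ.image f).orderEmbOfFin hcard :=
    Finset.orderEmbOfFin_unique hcard
      (fun x => Finset.mem_image_of_mem _ (Finset.mem_univ _)) hfm
  have h2 : g ∘ Fin.rev = (Finset.univ.image f).orderEmbOfFin hcard :=
    Finset.orderEmbOfFin_unique hcard
      (fun x => h ▸ Finset.mem_image_of_mem _ (Finset.mem_univ _)) hgm
  funext i
  have := congrFun (h1.trans h2.symm) i.rev
  simpa using this

/-- `g₀`-dominance implies the tilde coordinates are strictly decreasing. -/
lemma tilde_strictAnti {m : ℕ} {lam : Wt m} (h : G0Dom m lam) :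
    StrictAnti (tilde m lam).2 := by
  intro i j hij
  have h1 : lam.2 j ≤ lam.2 i := h.1 i j (le_of_lt hij)
  have h2 : ((i : ℕ) : ℚ) < ((j : ℕ) : ℚ) := by exact_mod_cast hij
  simp only [tilde]
  linarith

/-- Lemma 3.7(1) for `k = 2m+1`: for a set `S` of `m−1` distinct
positive half-integers, the map `λ ↦ λ̃₀` is a bijection from the set of
integral `g₀`-dominant atypical weights with atypicality type `S` onto
`{t ∈ 1/2 + ℤ : |t| ∉ S}`. -/
theorem atypical_weights_classification_B (m : ℕ) (hm : 1 ≤ m)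
    (S : Finset ℚ) (hcard : S.card = m - 1)
    (hS : ∀ x ∈ S, ∃ n : ℕ, x = (n : ℚ) + 1 / 2) :
    Set.BijOn (fun lam => (tilde m lam).1)
      {lam : Wt m |
        Integral m lam ∧ G0Dom m lam ∧ Atypical m lam ∧ atypType m lam = S}
      {t : ℚ | (∃ n : ℤ, t = (n : ℚ) + 1 / 2) ∧ |t| ∉ S} := by
  refine ⟨?_, ?_, ?_⟩
  · -- MapsTo
    rintro lam ⟨hInt, _hDom, _hAt, hType⟩
    refine ⟨?_, ?_⟩
    · obtain ⟨n, hn⟩ := hInt.1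
      exact ⟨n - m, by simp only [tilde, hn]; push_cast; ring⟩
    · rw [← hType]
      exact Finset.notMem_erase _ _
  · -- InjOn
    rintro lam ⟨_, hDomL, hAtL, hTypeL⟩ mu ⟨_, hDomM, hAtM, hTypeM⟩ h
    simp only at h
    have h1 : lam.1 = mu.1 := by
      have := h
      simp only [tilde] at this
      linarith
    obtain ⟨l, hl⟩ := hAtL
    obtain ⟨l', hl'⟩ := hAtM
    have himL : Finset.univ.image (tilde m lam).2 =
        insert |(tilde m lam).1| S := by
      rw [← hTypeL, atypType, Finset.insert_erase]
      rw [hl]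
      exact Finset.mem_image_of_mem _ (Finset.mem_univ l)
    have himM : Finset.univ.image (tilde m mu).2 =
        insert |(tilde m mu).1| S := by
      rw [← hTypeM, atypType, Finset.insert_erase]
      rw [hl']
      exact Finset.mem_image_of_mem _ (Finset.mem_univ l')
    have him : Finset.univ.image (tilde m lam).2 =
        Finset.univ.image (tilde m mu).2 := by
      rw [himL, himM, h]
    have h2 : (tilde m lam).2 = (tilde m mu).2 :=
      strictAnti_eq_of_image_eq (tilde_strictAnti hDomL) (tilde_strictAnti hDomM) him
    have h3 : lam.2 = mu.2 := by
      funext i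
      have := congrFun h2 i
      simp only [tilde] at this
      linarith
    exact Prod.ext h1 h3
  · -- SurjOn
    rintro t ⟨⟨n, hn⟩, hnot⟩
    have htabs : ∃ k : ℕ, |t| = (k : ℚ) + 1 / 2 := by
      rcases le_or_gt 0 n with hn0 | hn0
      · have h0 : (0 : ℚ) ≤ (n : ℚ) := by exact_mod_cast hn0
        refine ⟨n.toNat, ?_⟩
        rw [hn, abs_of_nonneg (by linarith)]
        congr 1
        exact_mod_cast (Int.toNat_of_nonneg hn0).symm
      · refine ⟨(-n - 1).toNat, ?_⟩
        have hn1 : n ≤ -1 := by omega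
        have h0 : (n : ℚ) ≤ -1 := by exact_mod_cast hn1
        rw [hn, abs_of_neg (by linarith)]
        have h2 : (((-n - 1).toNat : ℤ) : ℚ) = ((-n - 1 : ℤ) : ℚ) := by
          exact_mod_cast congrArg (Int.cast : ℤ → ℚ) (Int.toNat_of_nonneg (by omega))
        have h3 : (((-n - 1).toNat : ℕ) : ℚ) = ((-n - 1 : ℤ) : ℚ) := by push_cast at h2 ⊢; linarith
        rw [h3]
        push_cast
        ring
    set T : Finset ℚ := insert |t| S with hT
    have hTcard : T.card = m := by
      rw [Finset.card_insert_of_notMem hnot, hcard]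
      omega
    have hThalf : ∀ x ∈ T, ∃ k : ℕ, x = (k : ℚ) + 1 / 2 := by
      intro x hx
      rcases Finset.mem_insert.mp hx with hx | hx
      · exact hx ▸ htabs
      · exact hS x hx
    set g : Fin m → ℚ := fun i => T.orderEmbOfFin hTcard i.rev with hg
    have hg_anti : StrictAnti g := fun i j hij =>
      (T.orderEmbOfFin hTcard).strictMono (Fin.rev_lt_rev.mpr hij)
    have hg_mem : ∀ i, g i ∈ T := fun i => Finset.orderEmbOfFin_mem T hTcard i.rev
    have hg_half : ∀ i, ∃ k : ℤ, g i = (k : ℚ) + 1 / 2 := by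
      intro i
      obtain ⟨k, hk⟩ := hThalf _ (hg_mem i)
      exact ⟨k, hk⟩
    have hg_image : Finset.univ.image g = T := by
      apply Finset.eq_of_subset_of_card_le
      · intro x hx
        obtain ⟨i, _, rfl⟩ := Finset.mem_image.mp hx
        exact hg_mem i
      · rw [hTcard, Finset.card_image_of_injective _ hg_anti.injective,
          Finset.card_univ, Fintype.card_fin]
    -- the weight
    set lam : Wt m := (t - 1 / 2 + m,
        fun i => g i - ((m : ℚ) - 1 / 2 - ((i : ℕ) : ℚ))) with hlam
    have htilde : tilde m lam = (t, g) := by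
      simp only [tilde, hlam]
      refine Prod.ext (by ring) (funext fun i => by ring)
    refine ⟨lam, ⟨?_, ?_, ?_, ?_⟩, ?_⟩
    · -- Integral
      constructor
      · exact ⟨n + m, by simp only [hlam, hn]; push_cast; ring⟩
      · left
        intro i
        obtain ⟨k, hk⟩ := hThalf _ (hg_mem i)
        refine ⟨(k : ℤ) + 1 + i - m, ?_⟩
        simp only [hlam, hk]
        push_cast
        ring
    · -- G0Dom
      have gap : ∀ i j : Fin m, i ≤ j → g j + (((j : ℕ) : ℚ) - ((i : ℕ) : ℚ)) ≤ g i := by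
        intro i j hij
        have hd : (j : ℕ) = (i : ℕ) + ((j : ℕ) - (i : ℕ)) := by omega
        have := strictAnti_gap hg_anti hg_half ((j : ℕ) - (i : ℕ)) i j hd
        have hc : ((((j : ℕ) - (i : ℕ) : ℕ)) : ℚ) = ((j : ℕ) : ℚ) - ((i : ℕ) : ℚ) := by
          have : ((i : ℕ) : ℚ) + ((((j : ℕ) - (i : ℕ) : ℕ)) : ℚ) = ((j : ℕ) : ℚ) := by
            exact_mod_cast congrArg (Nat.cast : ℕ → ℚ) hd.symm
          linarith
        linarith [hc ▸ this]
      constructor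
      · intro i j hij
        have := gap i j hij
        simp only [hlam]
        linarith
      · intro i
        have hml : m - 1 < m := by omega
        set j : Fin m := ⟨m - 1, hml⟩ with hj
        have hij : i ≤ j := by
          simp only [Fin.le_def, hj]
          omega
        have h1 := gap i j hij
        obtain ⟨k, hk⟩ := hThalf _ (hg_mem j)
        have h2 : (1 : ℚ) / 2 ≤ g j := by
          rw [hk]
          have : (0 : ℚ) ≤ k := Nat.cast_nonneg k
          linarith
        have h3 : ((j : ℕ) : ℚ) = (m : ℚ) - 1 := by
          have : ((j : ℕ) : ℕ) + 1 = m := by simp only [hj]; omega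
          have := congrArg (Nat.cast : ℕ → ℚ) this
          push_cast at this
          linarith
        simp only [hlam]
        rw [h3] at h1
        linarith
    · -- Atypical
      have hmemT : |t| ∈ Finset.univ.image g := by
        rw [hg_image]; exact Finset.mem_insert_self _ _
      obtain ⟨l, _, hl⟩ := Finset.mem_image.mp hmemT
      exact ⟨l, by rw [htilde]; exact hl.symm⟩
    · -- atypType = S
      rw [atypType, htilde]
      simp only
      rw [hg_image, hT, Finset.erase_insert hnot]
    · -- maps to t
      show (tilde m lam).1 = t
      rw [htilde]

end
end

section
/- Let S be a set of m−1 distinct positive integers (so 0 ∉ S). Then the map sending λ to the pair (λ̃_0, ε), where ε = +1 if λ̃_m ≥ 0 and ε = −1 if λ̃_m < 0, is a bijection from the set of integral g_0-dominant atypical weights with atypicality type S onto the set {(t, ε) ∈ ℤ × {+1, −1} : |t| ∉ S, and ε = +1 if t = 0}. (This is the classification P^{0+}_{λ̄} = {λ^{(i)}_± : i ∈ ℤ} of Lemma 3.7(1) in the case k = 2m with 0 ∉ S(λ̄).) -/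
/-!
Combinatorics of weights for the orthosymplectic Lie superalgebra
`osp_{2m|2} = D(m,1)` (so `k = 2m`, `s = 1`), with its distinguished Borel
subalgebra.  A weight is a tuple `λ = (λ₀ | λ₁, …, λ_m) ∈ ℚ^{m+1}`, encoded
as `ℚ × (Fin m → ℚ)` (the index `i : Fin m` stands for `λ_{i+1}`).
-/

open Finset

noncomputable section

/-- The ρ-translated weight `λ̃ = λ + ρ`, with `ρ = (1−m | m−1, m−2, …, 0)`. -/
def tildeD (m : ℕ) (lam : Wt m) : Wt m :=
  (lam.1 + 1 - m, fun i => lam.2 i + (m : ℚ) - 1 - ((i : ℕ) : ℚ))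

/-- `λ` is integral: `λᵢ ∈ ℤ` for all `0 ≤ i ≤ m`. -/
def IntegralD (m : ℕ) (lam : Wt m) : Prop :=
  (∃ n : ℤ, lam.1 = (n : ℚ)) ∧ ∀ i, ∃ n : ℤ, lam.2 i = (n : ℚ)

/-- `λ` is `g₀`-dominant: `λ₁ ≥ λ₂ ≥ … ≥ λ_{m−1} ≥ |λ_m|`. -/
def G0DomD (m : ℕ) (lam : Wt m) : Prop :=
  ∀ i j : Fin m, i < j →
    (if (j : ℕ) = m - 1 then |lam.2 j| else lam.2 j) ≤ lam.2 i

/-- `λ` is atypical: `|λ̃₀| = |λ̃_ℓ|` for some `ℓ`. -/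
def AtypicalD (m : ℕ) (lam : Wt m) : Prop :=
  ∃ l : Fin m, |(tildeD m lam).1| = |(tildeD m lam).2 l|

/-- The atypicality type `S(λ̄) = {|λ̃_i| : i ≠ ℓ}` of an atypical
`g₀`-dominant weight `λ` (where `|λ̃_ℓ| = |λ̃₀|`). -/
def atypTypeD (m : ℕ) (lam : Wt m) : Finset ℚ :=
  (Finset.univ.image fun i => |(tildeD m lam).2 i|).erase |(tildeD m lam).1|

/- ### Auxiliary lemmas -/

private lemma intq_add_one_le {x y : ℚ} (hx : ∃ n : ℤ, x = (n : ℚ))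
    (hy : ∃ n : ℤ, y = (n : ℚ)) (h : x < y) : x + 1 ≤ y := by
  obtain ⟨a, rfl⟩ := hx
  obtain ⟨b, rfl⟩ := hy
  have hab : a < b := by exact_mod_cast h
  have : a + 1 ≤ b := hab
  exact_mod_cast this

/-- If a function `Fin m → ℚ` takes integer values and is strictly antitone,
then it decreases by at least the gap of indices. -/
private lemma gap_lemma {m : ℕ} {u : Fin m → ℚ} (hint : ∀ i, ∃ n : ℤ, u i = (n : ℚ))
    (hanti : StrictAnti u) :
    ∀ (d : ℕ) (i j : Fin m), (j : ℕ) = (i : ℕ) + d → u j + (d : ℚ) ≤ u i := by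
  intro d
  induction d with
  | zero =>
    intro i j h
    have : j = i := Fin.ext (by omega)
    simp [this]
  | succ d ih =>
    intro i j h
    have hj' : (i : ℕ) + d < m := by omega
    have h1 := ih i ⟨(i : ℕ) + d, hj'⟩ rfl
    have hlt : (⟨(i : ℕ) + d, hj'⟩ : Fin m) < j := by
      rw [Fin.lt_def]; simp; omega
    have h2 := intq_add_one_le (hint j) (hint ⟨(i : ℕ) + d, hj'⟩) (hanti hlt)
    push_cast
    push_cast at h1
    linarith

/-- Two strictly antitone functions `Fin m → ℚ` with the same range agree. -/
private lemma strictAnti_range_inj {m : ℕ} {f g : Fin m → ℚ}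
    (hf : StrictAnti f) (hg : StrictAnti g) (h : Set.range f = Set.range g) :
    f = g := by
  have hf' : StrictMono (f ∘ Fin.rev) := fun i j hij => hf (Fin.rev_lt_rev.mpr hij)
  have hg' : StrictMono (g ∘ Fin.rev) := fun i j hij => hg (Fin.rev_lt_rev.mpr hij)
  have hr : Set.range (f ∘ Fin.rev) = Set.range (g ∘ Fin.rev) := by
    rw [Set.range_comp, Set.range_comp, Fin.rev_surjective.range_eq,
      Set.image_univ, Set.image_univ, h]
  have := (StrictMono.range_inj hf' hg').mp hr
  funext i
  have := congrFun this (Fin.rev i)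
  simpa using this

/-- The auxiliary function `u i = |λ̃_{i+1}|` if `i` is last, else `λ̃_{i+1}`. -/
private def uD (m : ℕ) (lam : Wt m) : Fin m → ℚ :=
  fun i => if (i : ℕ) = m - 1 then |(tildeD m lam).2 i| else (tildeD m lam).2 i

private lemma tildeD_snd (m : ℕ) (lam : Wt m) (i : Fin m) :
    (tildeD m lam).2 i = lam.2 i + (m : ℚ) - 1 - ((i : ℕ) : ℚ) := rfl

private lemma uD_strictAnti {m : ℕ} (hm : 2 ≤ m) (lam : Wt m)
    (hdom : G0DomD m lam) : StrictAnti (uD m lam) := by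
  intro i j hij
  have hdj := hdom i j hij
  have hij' : ((i : ℕ) : ℚ) < ((j : ℕ) : ℚ) := by exact_mod_cast hij
  have hj : (j : ℕ) ≤ m - 1 := by omega
  unfold uD
  by_cases hjl : (j : ℕ) = m - 1
  · have hil : ¬ (i : ℕ) = m - 1 := by
      have : (i : ℕ) < (j : ℕ) := hij
      omega
    rw [if_pos hjl, if_neg hil]
    rw [if_pos hjl] at hdj
    have habs : |(tildeD m lam).2 j| = |lam.2 j| := by
      rw [tildeD_snd]
      have : ((j : ℕ) : ℚ) = (m : ℚ) - 1 := by
        rw [hjl]; push_cast [Nat.cast_sub (by omega : 1 ≤ m)]; ring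
      rw [this]; ring_nf
    rw [habs, tildeD_snd]
    have him : ((i : ℕ) : ℚ) < (m : ℚ) - 1 := by
      have : (i : ℕ) < m - 1 := by omega
      have h2 : ((i : ℕ) : ℚ) < ((m - 1 : ℕ) : ℚ) := by exact_mod_cast this
      rwa [Nat.cast_sub (by omega : 1 ≤ m), Nat.cast_one] at h2
    linarith
  · have hil : ¬ (i : ℕ) = m - 1 := by
      have : (i : ℕ) < (j : ℕ) := hij
      omega
    rw [if_neg hjl, if_neg hil]
    rw [if_neg hjl] at hdj
    rw [tildeD_snd, tildeD_snd]
    linarith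

private lemma uD_last_nonneg {m : ℕ} (hm : 2 ≤ m) (lam : Wt m) :
    0 ≤ uD m lam ⟨m - 1, by omega⟩ := by
  unfold uD
  simp [abs_nonneg]

private lemma abs_tildeD_eq_uD {m : ℕ} (hm : 2 ≤ m) (lam : Wt m)
    (hdom : G0DomD m lam) (i : Fin m) :
    |(tildeD m lam).2 i| = uD m lam i := by
  by_cases hil : (i : ℕ) = m - 1
  · unfold uD; rw [if_pos hil]
  · have hlast : i < (⟨m - 1, by omega⟩ : Fin m) := by
      rw [Fin.lt_def]; simp; omega
    have h1 := uD_strictAnti hm lam hdom hlast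
    have h2 := uD_last_nonneg hm lam
    have hpos : 0 < uD m lam i := lt_of_le_of_lt h2 h1
    unfold uD at hpos ⊢
    rw [if_neg hil] at hpos ⊢
    exact abs_of_pos hpos

private lemma uD_int {m : ℕ} (lam : Wt m) (hint : IntegralD m lam) (i : Fin m) :
    ∃ n : ℤ, uD m lam i = (n : ℚ) := by
  obtain ⟨n, hn⟩ := hint.2 i
  have hv : ∃ k : ℤ, (tildeD m lam).2 i = (k : ℚ) := by
    refine ⟨n + m - 1 - (i : ℕ), ?_⟩
    rw [tildeD_snd, hn]; push_cast; ring
  obtain ⟨k, hk⟩ := hv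
  unfold uD
  by_cases hil : (i : ℕ) = m - 1
  · rw [if_pos hil, hk]
    exact ⟨|k|, by push_cast; rfl⟩
  · rw [if_neg hil]; exact ⟨k, hk⟩

/- ### Main theorem -/

/-- Lemma 3.7(1) for `k = 2m` with `0 ∉ S(λ̄)`: for a set `S` of
`m−1` distinct positive integers, the map `λ ↦ (λ̃₀, ε)`, where `ε = +1` if
`λ̃_m ≥ 0` and `ε = −1` if `λ̃_m < 0`, is a bijection from the set of integral
`g₀`-dominant atypical weights with atypicality type `S` onto
`{(t, ε) ∈ ℤ × {+1, −1} : |t| ∉ S, and ε = +1 if t = 0}`. -/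
theorem atypical_weights_classification_D_nonzero (m : ℕ) (hm : 2 ≤ m)
    (S : Finset ℚ) (hcard : S.card = m - 1)
    (hSpos : ∀ x ∈ S, ∃ n : ℕ, 0 < n ∧ x = (n : ℚ)) :
    Set.BijOn
      (fun lam : Wt m =>
        ((tildeD m lam).1,
          if 0 ≤ (tildeD m lam).2 ⟨m - 1, by omega⟩ then (1 : ℤ) else -1))
      {lam : Wt m |
        IntegralD m lam ∧ G0DomD m lam ∧ AtypicalD m lam ∧ atypTypeD m lam = S}
      {p : ℚ × ℤ | (∃ n : ℤ, p.1 = (n : ℚ)) ∧ |p.1| ∉ S ∧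
        (p.2 = 1 ∨ p.2 = -1) ∧ (p.1 = 0 → p.2 = 1)} := by
  have hlastlt : m - 1 < m := by omega
  set last : Fin m := ⟨m - 1, hlastlt⟩ with hlastdef
  have himg : ∀ lam : Wt m, G0DomD m lam →
      (Finset.univ.image fun i => |(tildeD m lam).2 i|) =
        Finset.univ.image (uD m lam) := by
    intro lam hdom
    apply Finset.image_congr
    intro i _
    exact abs_tildeD_eq_uD hm lam hdom i
  constructor
  · -- MapsTo
    rintro lam ⟨hint, hdom, ⟨l, hl⟩, hatyp⟩
    refine ⟨?_, ?_, ?_, ?_⟩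
    · obtain ⟨n, hn⟩ := hint.1
      exact ⟨n + 1 - m, by simp only [tildeD, hn]; push_cast; ring⟩
    · show |(tildeD m lam).1| ∉ S
      rw [← hatyp]
      exact Finset.notMem_erase _ _
    · show (if 0 ≤ (tildeD m lam).2 last then (1 : ℤ) else -1) = 1 ∨
        (if 0 ≤ (tildeD m lam).2 last then (1 : ℤ) else -1) = -1
      split
      · exact Or.inl rfl
      · exact Or.inr rfl
    · show (tildeD m lam).1 = 0 →
        (if 0 ≤ (tildeD m lam).2 last then (1 : ℤ) else -1) = 1
      intro ht0
      rw [ht0] at hl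
      simp only [abs_zero] at hl
      have hll : l = last := by
        by_contra hne
        have hil : ¬ (l : ℕ) = m - 1 := fun h => hne (Fin.ext h)
        have habs := abs_tildeD_eq_uD hm lam hdom l
        have hlt : l < last := by rw [Fin.lt_def]; simp only [last]; omega
        have h1 := uD_strictAnti hm lam hdom hlt
        have h2 : (0 : ℚ) ≤ uD m lam last := uD_last_nonneg hm lam
        rw [← habs, ← hl] at h1
        exact absurd h1 (not_lt.mpr h2)
      rw [hll] at hl
      have hz : (tildeD m lam).2 last = 0 := abs_eq_zero.mp hl.symm
      rw [if_pos (le_of_eq hz.symm)]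
  constructor
  · -- InjOn
    rintro lam ⟨hint1, hdom1, ⟨l1, hl1⟩, hatyp1⟩ mu ⟨hint2, hdom2, ⟨l2, hl2⟩, hatyp2⟩ heq
    simp only [Prod.mk.injEq] at heq
    obtain ⟨ht, he⟩ := heq
    have he' : (if 0 ≤ (tildeD m lam).2 last then (1 : ℤ) else -1) =
        (if 0 ≤ (tildeD m mu).2 last then (1 : ℤ) else -1) := he
    have himgeq : ∀ (lam : Wt m), G0DomD m lam → AtypicalD m lam →
        atypTypeD m lam = S →
        Finset.univ.image (uD m lam) = insert |(tildeD m lam).1| S := by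
      intro lam hdom hat hatyp
      obtain ⟨l, hl⟩ := hat
      have hmem : |(tildeD m lam).1| ∈ Finset.univ.image (uD m lam) := by
        rw [← himg lam hdom]
        exact Finset.mem_image.mpr ⟨l, Finset.mem_univ l, hl.symm⟩
      rw [← hatyp]
      unfold atypTypeD
      rw [himg lam hdom]
      exact (Finset.insert_erase hmem).symm
    have hrange : Set.range (uD m lam) = Set.range (uD m mu) := by
      have h1 := himgeq lam hdom1 ⟨l1, hl1⟩ hatyp1
      have h2 := himgeq mu hdom2 ⟨l2, hl2⟩ hatyp2
      rw [ht] at h1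
      have h3 : Finset.univ.image (uD m lam) = Finset.univ.image (uD m mu) := by
        rw [h1, h2]
      have hc := congrArg (fun s : Finset ℚ => (s : Set ℚ)) h3
      simpa [Finset.coe_image, Set.image_univ] using hc
    have hueq : uD m lam = uD m mu :=
      strictAnti_range_inj (uD_strictAnti hm lam hdom1)
        (uD_strictAnti hm mu hdom2) hrange
    have hveq : ∀ i : Fin m, (tildeD m lam).2 i = (tildeD m mu).2 i := by
      intro i
      by_cases hil : (i : ℕ) = m - 1
      · have habs : |(tildeD m lam).2 i| = |(tildeD m mu).2 i| := by
          have h := congrFun hueq i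
          unfold uD at h
          rwa [if_pos hil, if_pos hil] at h
        have hi : i = last := Fin.ext hil
        rw [hi] at habs ⊢
        by_cases hpos : 0 ≤ (tildeD m lam).2 last
        · rw [if_pos hpos] at he'
          by_cases hpos2 : 0 ≤ (tildeD m mu).2 last
          · rw [abs_of_nonneg hpos, abs_of_nonneg hpos2] at habs
            exact habs
          · rw [if_neg hpos2] at he'; omega
        · rw [if_neg hpos] at he'
          by_cases hpos2 : 0 ≤ (tildeD m mu).2 last
          · rw [if_pos hpos2] at he'; omega
          · push_neg at hpos hpos2
            rw [abs_of_neg hpos, abs_of_neg hpos2] at habs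
            linarith
      · have h := congrFun hueq i
        unfold uD at h
        rwa [if_neg hil, if_neg hil] at h
    have h1 : lam.1 = mu.1 := by
      have h : lam.1 + 1 - m = mu.1 + 1 - m := ht
      linarith
    have h2 : lam.2 = mu.2 := by
      funext i
      have h := hveq i
      rw [tildeD_snd, tildeD_snd] at h
      linarith
    exact Prod.ext h1 h2
  · -- SurjOn
    rintro ⟨t, e⟩ ⟨⟨n, hn⟩, hnotmem, he, ht0⟩
    dsimp only at hn hnotmem he ht0
    set T : Finset ℚ := insert |t| S with hTdef
    have hTcard : T.card = m := by
      rw [hTdef, Finset.card_insert_of_notMem hnotmem, hcard]; omega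
    have hTint : ∀ x ∈ T, ∃ k : ℤ, x = (k : ℚ) := by
      intro x hx
      rcases Finset.mem_insert.mp hx with h | h
      · exact ⟨|n|, by rw [h, hn]; push_cast; rfl⟩
      · obtain ⟨k, _, hk⟩ := hSpos x h
        exact ⟨k, by rw [hk]; push_cast; rfl⟩
    have hTnonneg : ∀ x ∈ T, 0 ≤ x := by
      intro x hx
      rcases Finset.mem_insert.mp hx with h | h
      · rw [h]; exact abs_nonneg t
      · obtain ⟨k, hk, hk2⟩ := hSpos x h
        rw [hk2]; positivity
    set o := T.orderIsoOfFin hTcard with hodef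
    set u : Fin m → ℚ := fun i => (o (Fin.rev i) : ℚ) with hudef
    have humem : ∀ i, u i ∈ T := fun i => (o (Fin.rev i)).2
    have huanti : StrictAnti u := by
      intro i j hij
      have h : Fin.rev j < Fin.rev i := Fin.rev_lt_rev.mpr hij
      exact_mod_cast o.strictMono h
    have huint : ∀ i, ∃ k : ℤ, u i = (k : ℚ) := fun i => hTint _ (humem i)
    have hunonneg : ∀ i, 0 ≤ u i := fun i => hTnonneg _ (humem i)
    have husurj : ∀ x ∈ T, ∃ i, u i = x := by
      intro x hx
      obtain ⟨j, hj⟩ := o.surjective ⟨x, hx⟩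
      refine ⟨Fin.rev j, ?_⟩
      simp only [hudef, Fin.rev_rev, hj]
    set v : Fin m → ℚ := fun i => if (i : ℕ) = m - 1 then (e : ℚ) * u i else u i
      with hvdef
    set lam : Wt m := (t - 1 + m, fun i => v i - (m : ℚ) + 1 + ((i : ℕ) : ℚ))
      with hlamdef
    have hlam1 : lam.1 = t - 1 + (m : ℚ) := rfl
    have hlam2 : ∀ i : Fin m, lam.2 i = v i - (m : ℚ) + 1 + ((i : ℕ) : ℚ) :=
      fun i => rfl
    have hvif : ∀ i : Fin m,
        v i = if (i : ℕ) = m - 1 then (e : ℚ) * u i else u i := fun i => rfl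
    have htilde1 : (tildeD m lam).1 = t := by
      show lam.1 + 1 - (m : ℚ) = t
      rw [hlam1]; ring
    have htilde2 : ∀ i, (tildeD m lam).2 i = v i := by
      intro i; rw [tildeD_snd, hlam2 i]; ring
    have habsv : ∀ i, |v i| = u i := by
      intro i
      rw [hvif i]
      by_cases hil : (i : ℕ) = m - 1
      · rw [if_pos hil, abs_mul]
        rcases he with h | h <;>
          · rw [h]; simp [abs_of_nonneg (hunonneg i)]
      · rw [if_neg hil]
        exact abs_of_nonneg (hunonneg i)
    have hgap : ∀ i j : Fin m, i < j →
        u j + (((j : ℕ) - (i : ℕ) : ℕ) : ℚ) ≤ u i := by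
      intro i j hij
      exact gap_lemma huint huanti ((j : ℕ) - (i : ℕ)) i j (by omega)
    refine ⟨lam, ⟨⟨?_, ?_⟩, ?_, ?_, ?_⟩, ?_⟩
    · exact ⟨n - 1 + m, by rw [hlam1, hn]; push_cast; ring⟩
    · intro i
      obtain ⟨k, hk⟩ := huint i
      rw [hlam2 i, hvif i]
      by_cases hil : (i : ℕ) = m - 1
      · rw [if_pos hil, hk]
        exact ⟨e * k - m + 1 + (i : ℕ), by push_cast; ring⟩
      · rw [if_neg hil, hk]
        exact ⟨k - m + 1 + (i : ℕ), by push_cast; ring⟩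
    · -- G0DomD
      intro i j hij
      have hiv : (i : ℕ) < (j : ℕ) := hij
      have hjm : (j : ℕ) ≤ m - 1 := by omega
      have hil : ¬ (i : ℕ) = m - 1 := by omega
      have hg := hgap i j hij
      have hcast : (((j : ℕ) - (i : ℕ) : ℕ) : ℚ)
          = ((j : ℕ) : ℚ) - ((i : ℕ) : ℚ) := by
        rw [Nat.cast_sub (le_of_lt hiv)]
      rw [hcast] at hg
      rw [hlam2 i, hlam2 j]
      have hvi : v i = u i := by rw [hvif i, if_neg hil]
      by_cases hjl : (j : ℕ) = m - 1
      · rw [if_pos hjl]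
        have hjq : ((j : ℕ) : ℚ) = (m : ℚ) - 1 := by
          rw [hjl, Nat.cast_sub (by omega : 1 ≤ m), Nat.cast_one]
        have hrw : v j - (m : ℚ) + 1 + ((j : ℕ) : ℚ) = v j := by
          rw [hjq]; ring
        rw [hrw, habsv, hvi]
        rw [hjq] at hg
        linarith
      · rw [if_neg hjl]
        have hvj : v j = u j := by rw [hvif j, if_neg hjl]
        rw [hvi, hvj]
        linarith
    · -- AtypicalD
      obtain ⟨l, hl⟩ := husurj |t| (Finset.mem_insert_self _ _)
      refine ⟨l, ?_⟩
      rw [htilde1, htilde2, habsv, hl]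
    · -- atypTypeD = S
      unfold atypTypeD
      rw [htilde1]
      have himv : (Finset.univ.image fun i => |(tildeD m lam).2 i|) = T := by
        have h1 : (fun i : Fin m => |(tildeD m lam).2 i|) = u := by
          funext i; rw [htilde2, habsv]
        rw [h1]
        apply Finset.eq_of_subset_of_card_le
        · intro x hx
          obtain ⟨i, _, hi⟩ := Finset.mem_image.mp hx
          rw [← hi]; exact humem i
        · rw [hTcard, Finset.card_image_of_injective _ huanti.injective,
            Finset.card_univ, Fintype.card_fin]
      rw [himv, hTdef]
      exact Finset.erase_insert hnotmem
    · -- image is (t, e)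
      show ((tildeD m lam).1,
        if 0 ≤ (tildeD m lam).2 last then (1 : ℤ) else -1) = (t, e)
      rw [htilde1, htilde2 last]
      have hvlast : v last = (e : ℚ) * u last := by
        rw [hvif last]
        exact if_pos rfl
      rw [hvlast]
      refine Prod.ext rfl ?_
      show (if 0 ≤ (e : ℚ) * u last then (1 : ℤ) else -1) = e
      rcases he with h | h
      · rw [h]
        rw [if_pos (by simpa using hunonneg last)]
      · have htne : t ≠ 0 := by
          intro h0
          rw [ht0 h0] at h
          omega
        have hupos : 0 < u last := by
          rcases Finset.mem_insert.mp (humem last) with hx | hx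
          · rw [hx]; exact abs_pos.mpr htne
          · obtain ⟨k, hk, hk2⟩ := hSpos _ hx
            rw [hk2]; exact_mod_cast hk
        rw [h, if_neg (by intro hcon; push_cast at hcon; linarith)]
end
end

section
/- Let S be a set of m−1 distinct positive half-integers and let a be the smallest positive half-integer not in S. An integral g_0-dominant atypical weight μ with atypicality type S is g-dominant if and only if μ̃_0 > 0 or μ̃_0 = −a. (This is the description P^{+}_{λ̄} = {λ^{(i)} : i ∈ ℤ≥0} of Lemma 3.7(1) for k = 2m+1.) -/
/-!
Combinatorics of weights for the orthosymplectic Lie superalgebra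
`osp_{2m+1|2} = B(m,1)` (so `k = 2m+1`, `s = 1/2`), with its distinguished
Borel subalgebra.  A weight is a tuple `λ = (λ₀ | λ₁, …, λ_m) ∈ ℚ^{m+1}`,
encoded as `ℚ × (Fin m → ℚ)` (the index `i : Fin m` stands for the coordinate
`λ_{i+1}`).
-/

open Finset

noncomputable section

/-- the description `P⁺_{λ̄} = {λ⁽ⁱ⁾ : i ∈ ℤ≥0}` of Lemma 3.7(1)
for `k = 2m+1`: let `S` be a set of `m−1` distinct positive half-integers and
`a` the smallest positive half-integer not in `S`.  An integral `g₀`-dominant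
atypical weight `μ` with atypicality type `S` is `g`-dominant if and only if
`μ̃₀ > 0` or `μ̃₀ = −a`. -/
theorem gDominant_iff_tilde0 (m : ℕ) (hm : 1 ≤ m)
    (S : Finset ℚ) (hcard : S.card = m - 1)
    (hS : ∀ x ∈ S, ∃ n : ℕ, x = (n : ℚ) + 1 / 2)
    (a : ℚ) (ha : ∃ n : ℕ, a = (n : ℚ) + 1 / 2) (haS : a ∉ S)
    (hmin : ∀ b : ℚ, (∃ n : ℕ, b = (n : ℚ) + 1 / 2) → b ∉ S → a ≤ b)
    (mu : Wt m) (hInt : Integral m mu) (hdom : G0Dom m mu)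
    (hatyp : Atypical m mu) (htype : atypType m mu = S) :
    GDom m mu ↔ (0 < (tilde m mu).1 ∨ (tilde m mu).1 = -a) := by
  obtain ⟨l, hl⟩ := hatyp
  have hmono : ∀ i j : Fin m, (i : ℕ) ≤ (j : ℕ) →
      (tilde m mu).2 j + ((j : ℕ) : ℚ) - ((i : ℕ) : ℚ) ≤ (tilde m mu).2 i := by
    intro i j hij
    have h1 := hdom.1 i j hij
    have h2 : ((i : ℕ) : ℚ) ≤ ((j : ℕ) : ℚ) := by exact_mod_cast hij
    simp only [tilde]
    linarith
  have hlow : ∀ j : Fin m, (m : ℚ) - 1 / 2 - ((j : ℕ) : ℚ) ≤ (tilde m mu).2 j := by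
    intro j
    have := hdom.2 j
    simp only [tilde]
    linarith
  have hjm : ∀ j : Fin m, ((j : ℕ) : ℚ) + 1 ≤ (m : ℚ) := by
    intro j
    exact_mod_cast j.isLt
  have hpos : ∀ j : Fin m, 0 < (tilde m mu).2 j := by
    intro j
    have := hlow j
    have := hjm j
    linarith
  have hSeq : S = (Finset.univ.image fun i => (tilde m mu).2 i).erase |(tilde m mu).1| := by
    rw [← htype]; rfl
  have hnotS : |(tilde m mu).1| ∉ S := by
    rw [hSeq]
    exact Finset.notMem_erase _ _
  obtain ⟨z, hz⟩ := hInt.1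
  have t0eq : (tilde m mu).1 = (z : ℚ) + 1 / 2 - m := by
    simp only [tilde]
    rw [hz]
  have h0abs : 0 < |(tilde m mu).1| := by
    rw [hl]
    exact hpos l
  have hhalf : ∃ n : ℕ, |(tilde m mu).1| = (n : ℚ) + 1 / 2 := by
    rcases abs_cases (tilde m mu).1 with ⟨he, hge⟩ | ⟨he, hlt0⟩
    · refine ⟨(z - m).toNat, ?_⟩
      have hz0 : (0 : ℤ) ≤ z - m := by
        by_contra hc
        push_neg at hc
        have h1 : z - (m : ℤ) ≤ -1 := by omega
        have h2 : ((z : ℚ) - m) ≤ -1 := by exact_mod_cast h1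
        rw [he, t0eq] at h0abs
        linarith
      have hcast : (((z - m).toNat : ℕ) : ℚ) = (z : ℚ) - m := by
        rw [← Int.cast_natCast, Int.toNat_of_nonneg hz0]
        push_cast
        ring
      rw [he, t0eq]
      linarith
    · refine ⟨((m : ℤ) - z - 1).toNat, ?_⟩
      have hz0 : (0 : ℤ) ≤ (m : ℤ) - z - 1 := by
        by_contra hc
        push_neg at hc
        have h1 : (m : ℤ) ≤ z := by omega
        have h2 : ((m : ℚ)) ≤ z := by exact_mod_cast h1
        rw [t0eq] at hlt0
        linarith
      have hcast : ((((m : ℤ) - z - 1).toNat : ℕ) : ℚ) = (m : ℚ) - z - 1 := by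
        rw [← Int.cast_natCast, Int.toNat_of_nonneg hz0]
        push_cast
        ring
      rw [he, t0eq]
      linarith
  have haleabs : a ≤ |(tilde m mu).1| := hmin _ hhalf hnotS
  obtain ⟨na, hna⟩ := ha
  have hapos : 0 < a := by
    rw [hna]
    positivity
  constructor
  · rintro ⟨-, -, hmu0, htail⟩
    rcases lt_trichotomy 0 (tilde m mu).1 with h | h | h
    · exact Or.inl h
    · exfalso
      rw [← h, abs_zero] at h0abs
      exact lt_irrefl 0 h0abs
    · right
      have habs : |(tilde m mu).1| = -(tilde m mu).1 := abs_of_neg h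
      rcases eq_or_lt_of_le haleabs with he | hlt
      · rw [habs] at he
        linarith
      · exfalso
        apply haS
        have hlt' : (na : ℚ) + 1 / 2 < -(tilde m mu).1 := by
          rw [← hna, ← habs]
          exact hlt
        have ht0 : -(tilde m mu).1 = (m : ℚ) - 1 / 2 - mu.1 := by
          simp only [tilde]
          ring
        rw [ht0] at hlt'
        have hnm : na + 2 ≤ m := by
          have hq : (na : ℚ) + 1 < (m : ℚ) := by linarith
          have : na + 1 < m := by exact_mod_cast hq
          omega
        have hjlt : m - 1 - na < m := by omega
        have hjcast : (((m - 1 - na : ℕ)) : ℚ) = (m : ℚ) - 1 - na := by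
          have hh : (m - 1 - na) + na + 1 = m := by omega
          have h2 := congrArg (fun t : ℕ => (t : ℚ)) hh
          push_cast at h2
          linarith
        have hvmk : ((⟨m - 1 - na, hjlt⟩ : Fin m) : ℕ) = m - 1 - na := rfl
        have hmuj : mu.2 ⟨m - 1 - na, hjlt⟩ = 0 := by
          apply htail
          rw [hvmk, hjcast]
          linarith
        rw [hSeq]
        refine Finset.mem_erase.mpr ⟨ne_of_lt hlt, Finset.mem_image.mpr
          ⟨⟨m - 1 - na, hjlt⟩, Finset.mem_univ _, ?_⟩⟩
        show (tilde m mu).2 ⟨m - 1 - na, hjlt⟩ = a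
        simp only [tilde]
        rw [hmuj, hjcast, hna]
        ring
  · rintro (h | h)
    · have h1 : (tilde m mu).1 = (tilde m mu).2 l := by
        rw [← abs_of_pos h, hl]
      have h2 : mu.1 + 1 / 2 - (m : ℚ) = mu.2 l + (m : ℚ) - 1 / 2 - ((l : ℕ) : ℚ) := by
        simpa only [tilde] using h1
      have hmu1 : (m : ℚ) ≤ mu.1 := by
        have := hdom.2 l
        have := hjm l
        linarith
      have hm1 : (1 : ℚ) ≤ (m : ℚ) := by exact_mod_cast hm
      refine ⟨hInt, hdom, by linarith, ?_⟩
      intro i hi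
      exfalso
      have := hjm i
      linarith
    · have habs2 : |(tilde m mu).1| = a := by
        rw [h, abs_neg, abs_of_pos hapos]
      have htl : (tilde m mu).2 l = a := by
        rw [← hl, habs2]
      have key : ∀ d : ℕ, ∀ j : Fin m, m - 1 - (j : ℕ) < d → (l : ℕ) ≤ (j : ℕ) →
          mu.2 j = 0 := by
        intro d
        induction d with
        | zero => exact fun j hj _ => absurd hj (Nat.not_lt_zero _)
        | succ d ih =>
          intro j hjd hlj
          by_contra hne0
          have hjpos : 0 < mu.2 j := lt_of_le_of_ne (hdom.2 j) (Ne.symm hne0)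
          have hb : (tilde m mu).2 j ≤ a := by
            have h3 := hmono l j hlj
            have hcast : ((l : ℕ) : ℚ) ≤ ((j : ℕ) : ℚ) := by exact_mod_cast hlj
            linarith [htl]
          have hbj : (m : ℚ) - 1 / 2 - ((j : ℕ) : ℚ) < (tilde m mu).2 j := by
            simp only [tilde]
            linarith
          have hba : (m : ℚ) - 1 / 2 - ((j : ℕ) : ℚ) < a := lt_of_lt_of_le hbj hb
          have hbform : ∃ n : ℕ, (m : ℚ) - 1 / 2 - ((j : ℕ) : ℚ) = (n : ℚ) + 1 / 2 := by
            refine ⟨m - 1 - (j : ℕ), ?_⟩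
            have hh : (m - 1 - (j : ℕ)) + (j : ℕ) + 1 = m := by
              have := j.isLt
              omega
            have h2 := congrArg (fun t : ℕ => (t : ℚ)) hh
            push_cast at h2
            linarith
          have hbS : (m : ℚ) - 1 / 2 - ((j : ℕ) : ℚ) ∈ S := by
            by_contra hbn
            exact absurd (hmin _ hbform hbn) (not_le.mpr hba)
          rw [hSeq] at hbS
          obtain ⟨hbne, hbim⟩ := Finset.mem_erase.mp hbS
          obtain ⟨j', -, hj'⟩ := Finset.mem_image.mp hbim
          have hj2 : (tilde m mu).2 j' = (m : ℚ) - 1 / 2 - ((j : ℕ) : ℚ) := hj'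
          have hjj' : (j : ℕ) < (j' : ℕ) := by
            rcases Nat.lt_or_ge (j : ℕ) (j' : ℕ) with hh | hh
            · exact hh
            · exfalso
              have h3 := hmono j' j hh
              have hcast : ((j' : ℕ) : ℚ) ≤ ((j : ℕ) : ℚ) := by exact_mod_cast hh
              linarith
          have hz' : mu.2 j' = 0 := by
            refine ih j' ?_ ?_
            · have := j'.isLt
              omega
            · omega
          have hj3 : (tilde m mu).2 j' = (m : ℚ) - 1 / 2 - ((j' : ℕ) : ℚ) := by
            simp only [tilde]
            rw [hz']
            ring
          have hcast2 : ((j : ℕ) : ℚ) + 1 ≤ ((j' : ℕ) : ℚ) := by exact_mod_cast hjj'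
          rw [hj3] at hj2
          linarith
      have hall : ∀ j : Fin m, (l : ℕ) ≤ (j : ℕ) → mu.2 j = 0 := fun j hj =>
        key m j (by omega) hj
      have hmul : mu.2 l = 0 := hall l le_rfl
      have hleq : a = (m : ℚ) - 1 / 2 - ((l : ℕ) : ℚ) := by
        rw [← htl]
        simp only [tilde]
        rw [hmul]
        ring
      have hmu1 : mu.1 = ((l : ℕ) : ℚ) := by
        have ht0 : mu.1 + 1 / 2 - (m : ℚ) = -a := by
          simpa only [tilde] using h
        rw [hleq] at ht0
        linarith
      refine ⟨hInt, hdom, by rw [hmu1]; exact Nat.cast_nonneg _, ?_⟩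
      intro i hi
      rw [hmu1] at hi
      have h2 : (l : ℕ) < (i : ℕ) + 1 := by exact_mod_cast hi
      exact hall i (by omega)

end
end

section
/- Let λ and μ be integral g_0-dominant atypical weights with the same atypicality type, and suppose that λ − μ = θδ + Σ_{i=1}^m θ_i(δ − ε_i) + Σ_{i=1}^m θ̄_i(δ + ε_i) for some θ ∈ ℤ≥0 and θ_i, θ̄_i ∈ {0, 1}. Then μ belongs to the set {λ, λˇ, λ^σ, (λ^σ)ˇ, (λ^σ)^}. (This is the combinatorial content of Lemma 3.8(1): P_0(V_λ) ⊆ {λ, λˇ, λ^σ, (λ^σ)ˇ, (λ^σ)^}, for k = 2m+1.) -/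
/-!
Combinatorics of weights for the orthosymplectic Lie superalgebra
`osp_{2m+1|2} = B(m,1)` (so `k = 2m+1`, `s = 1/2`), with its distinguished
Borel subalgebra.  A weight is a tuple `λ = (λ₀ | λ₁, …, λ_m) ∈ ℚ^{m+1}`,
encoded as `ℚ × (Fin m → ℚ)` (the index `i : Fin m` stands for the coordinate
`λ_{i+1}`).
-/

open Finset

noncomputable section

section AuxLemmas

variable {m : ℕ}

lemma tilde_inj {x y : Wt m} (h : tilde m x = tilde m y) : x = y := by
  have h1 := congrArg Prod.fst h
  have h2 := congrArg Prod.snd h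
  simp only [tilde] at h1 h2
  refine Prod.ext ?_ ?_
  · linarith
  · funext i
    have := congrFun h2 i
    simpa using this

lemma dom_pos {lam : Wt m} (h : G0Dom m lam) (i : Fin m) :
    (1/2 : ℚ) ≤ (tilde m lam).2 i := by
  have h1 := h.2 i
  have h3 : ((i : ℕ) + 1 : ℕ) ≤ m := i.isLt
  have h4 : (((i:ℕ) + 1 : ℕ) : ℚ) ≤ (m : ℚ) := by exact_mod_cast h3
  push_cast at h4
  simp only [tilde]
  linarith

lemma dom_gap {lam : Wt m} (h : G0Dom m lam) {i j : Fin m} (hij : (i:ℕ) < (j:ℕ)) :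
    (tilde m lam).2 j + 1 ≤ (tilde m lam).2 i := by
  have h1 : lam.2 j ≤ lam.2 i := h.1 i j (by rw [Fin.le_def]; exact Nat.le_of_lt hij)
  have h4 : ((i:ℕ) : ℚ) + 1 ≤ ((j:ℕ) : ℚ) := by exact_mod_cast hij
  simp only [tilde]
  linarith

lemma dom_anti {lam : Wt m} (h : G0Dom m lam) : StrictAnti (tilde m lam).2 := by
  intro i j hij
  have := dom_gap h (show (i:ℕ) < (j:ℕ) from hij)
  linarith

end AuxLemmas
section AuxLemmas2

variable {m : ℕ}

lemma strictAnti_image_eq {n : ℕ} {f g : Fin n → ℚ} (hf : StrictAnti f) (hg : StrictAnti g)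
    (h : Finset.image f Finset.univ = Finset.image g Finset.univ) : f = g := by
  have hfi : Function.Injective f := hf.injective
  have hcard : (Finset.image f Finset.univ).card = n := by
    rw [Finset.card_image_of_injective _ hfi, Finset.card_univ, Fintype.card_fin]
  have hF : StrictMono (f ∘ Fin.rev) := fun a b hab => hf (Fin.rev_lt_rev.mpr hab)
  have hG : StrictMono (g ∘ Fin.rev) := fun a b hab => hg (Fin.rev_lt_rev.mpr hab)
  have hfs : ∀ x, (f ∘ Fin.rev) x ∈ Finset.image f Finset.univ := fun x =>
    Finset.mem_image_of_mem f (Finset.mem_univ _)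
  have hgs : ∀ x, (g ∘ Fin.rev) x ∈ Finset.image f Finset.univ := fun x => by
    rw [h]; exact Finset.mem_image_of_mem g (Finset.mem_univ _)
  have e1 := Finset.orderEmbOfFin_unique hcard hfs hF
  have e2 := Finset.orderEmbOfFin_unique hcard hgs hG
  have e3 : f ∘ Fin.rev = g ∘ Fin.rev := e1.trans e2.symm
  funext i
  have := congrFun e3 i.rev
  simpa [Fin.rev_rev] using this

lemma tact_abs_image (w : W0T m) (v : Wt m) :
    Finset.image (fun i => |(tact m w v).2 i|) Finset.univ
      = Finset.image (fun i => |v.2 i|) Finset.univ := by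
  ext q
  simp only [Finset.mem_image, Finset.mem_univ, true_and, tact]
  constructor
  · rintro ⟨i, hi⟩
    refine ⟨w.1⁻¹ i, ?_⟩
    rw [← hi]
    split_ifs <;> simp [abs_mul]
  · rintro ⟨i, hi⟩
    refine ⟨w.1 i, ?_⟩
    rw [← hi]
    simp only [Equiv.Perm.inv_def, Equiv.symm_apply_apply]
    split_ifs <;> simp [abs_mul]

lemma plus_unique {nu mu : Wt m} {w : W0T m} {y : Wt m}
    (hnu : G0Dom m nu) (hw : tilde m nu = tact m w y)
    (hmu : G0Dom m mu) (h1 : (tilde m mu).1 = y.1)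
    (h2 : Finset.image (fun i => |(tilde m mu).2 i|) Finset.univ
        = Finset.image (fun i => |y.2 i|) Finset.univ) : mu = nu := by
  have keynu : Finset.image (fun i => |(tilde m nu).2 i|) Finset.univ
      = Finset.image (fun i => |y.2 i|) Finset.univ := by
    rw [hw]; exact tact_abs_image w y
  have inu : (fun i => |(tilde m nu).2 i|) = (tilde m nu).2 :=
    funext fun i => abs_of_pos (by linarith [dom_pos hnu i])
  have imu : (fun i => |(tilde m mu).2 i|) = (tilde m mu).2 :=
    funext fun i => abs_of_pos (by linarith [dom_pos hmu i])
  rw [imu] at h2; rw [inu] at keynu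
  have hsnd : (tilde m mu).2 = (tilde m nu).2 :=
    strictAnti_image_eq (dom_anti hmu) (dom_anti hnu) (h2.trans keynu.symm)
  have hfst : (tilde m mu).1 = (tilde m nu).1 := by
    rw [h1, hw]; rfl
  exact tilde_inj (Prod.ext hfst hsnd)

lemma atypRoot_plus {nu γ : Wt m} (hdom : G0Dom m nu) {l₀ : Fin m}
    (hl : (tilde m nu).1 = (tilde m nu).2 l₀) (h : AtypRoot m nu γ) :
    γ = deltaW m + epsW l₀ := by
  obtain ⟨l, ⟨hγ, he⟩ | ⟨hγ, he⟩⟩ := h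
  · have : (tilde m nu).2 l = (tilde m nu).2 l₀ := by rw [← he, hl]
    rw [(dom_anti hdom).injective this] at hγ; exact hγ
  · exfalso
    have := dom_pos hdom l; have := dom_pos hdom l₀
    rw [hl] at he; linarith

lemma atypRoot_minus {nu γ : Wt m} (hdom : G0Dom m nu) {l₀ : Fin m}
    (hl : (tilde m nu).1 = -(tilde m nu).2 l₀) (h : AtypRoot m nu γ) :
    γ = deltaW m - epsW l₀ := by
  obtain ⟨l, ⟨hγ, he⟩ | ⟨hγ, he⟩⟩ := h
  · exfalso
    have := dom_pos hdom l; have := dom_pos hdom l₀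
    rw [hl] at he; linarith
  · have : (tilde m nu).2 l = (tilde m nu).2 l₀ := by
      have := he.symm.trans hl; linarith [this]
    rw [(dom_anti hdom).injective this] at hγ; exact hγ

lemma tilde_sub_plus (nu : Wt m) (c : ℚ) (l : Fin m) :
    tilde m (nu - c • (deltaW m + epsW l)) =
      ((tilde m nu).1 - c, fun i => if i = l then (tilde m nu).2 l - c else (tilde m nu).2 i) := by
  refine Prod.ext ?_ ?_
  · simp only [tilde, deltaW, epsW, Prod.fst_sub, Prod.smul_fst, Prod.fst_add, smul_eq_mul]
    ring
  · funext i
    simp only [tilde, deltaW, epsW, Prod.snd_sub, Prod.smul_snd, Prod.snd_add, Pi.sub_apply,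
      Pi.smul_apply, Pi.add_apply, Pi.zero_apply, Pi.single_apply, smul_eq_mul, mul_ite]
    by_cases h : i = l
    · subst h; simp; ring
    · simp [h]

lemma tilde_sub_minus (nu : Wt m) (c : ℚ) (l : Fin m) :
    tilde m (nu - c • (deltaW m - epsW l)) =
      ((tilde m nu).1 - c, fun i => if i = l then (tilde m nu).2 l + c else (tilde m nu).2 i) := by
  refine Prod.ext ?_ ?_
  · simp only [tilde, deltaW, epsW, Prod.fst_sub, Prod.smul_fst, smul_eq_mul]
    ring
  · funext i
    simp only [tilde, deltaW, epsW, Prod.snd_sub, Prod.smul_snd, Pi.sub_apply,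
      Pi.smul_apply, Pi.zero_apply, Pi.single_apply, smul_eq_mul, mul_ite]
    by_cases h : i = l
    · subst h; simp; ring
    · simp [h]

lemma tilde_add_minus (nu : Wt m) (c : ℚ) (l : Fin m) :
    tilde m (nu + c • (deltaW m - epsW l)) =
      ((tilde m nu).1 + c, fun i => if i = l then (tilde m nu).2 l - c else (tilde m nu).2 i) := by
  refine Prod.ext ?_ ?_
  · simp only [tilde, deltaW, epsW, Prod.fst_add, Prod.fst_sub, Prod.smul_fst, smul_eq_mul]
    ring
  · funext i
    simp only [tilde, deltaW, epsW, Prod.snd_add, Prod.snd_sub, Pi.add_apply, Pi.sub_apply,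
      Pi.smul_apply, Pi.zero_apply, Pi.single_apply, smul_eq_mul, mul_ite]
    by_cases h : i = l
    · subst h; simp; ring
    · simp [h]

lemma tilde_sigma (lam : Wt m) :
    tilde m (sigmaW m lam) = (-(tilde m lam).1, (tilde m lam).2) := by
  refine Prod.ext ?_ rfl
  simp only [tilde, sigmaW]
  ring

lemma dom_sigma {lam : Wt m} (h : G0Dom m lam) : G0Dom m (sigmaW m lam) := h

end AuxLemmas2
section AuxLemmas3

variable {m : ℕ}

lemma image_abs_eq {A B : Fin m → ℚ} {ℓ ℓ' : Fin m}
    (hApos : ∀ i, (1/2:ℚ) ≤ A i) (hBpos : ∀ i, (1/2:ℚ) ≤ B i)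
    (hAinj : Function.Injective A)
    (hS : (Finset.image A Finset.univ).erase (A ℓ)
        = (Finset.image B Finset.univ).erase (B ℓ')) (v : ℚ) (hv : v = B ℓ') :
    Finset.image (fun i => |B i|) Finset.univ
      = Finset.image (fun i => |if i = ℓ then v else A i|) Finset.univ := by
  subst hv
  have h1 : (fun i : Fin m => |B i|) = B :=
    funext fun i => abs_of_pos (by linarith [hBpos i])
  have h2 : (fun i : Fin m => |if i = ℓ then B ℓ' else A i|)
      = fun i => if i = ℓ then B ℓ' else A i := by
    funext i
    split_ifs
    · exact abs_of_pos (by linarith [hBpos ℓ'])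
    · exact abs_of_pos (by linarith [hApos i])
  rw [h1, h2]
  have hBmem : B ℓ' ∈ Finset.image B Finset.univ :=
    Finset.mem_image_of_mem _ (Finset.mem_univ _)
  have e2 : Finset.image (fun i => if i = ℓ then B ℓ' else A i) Finset.univ
      = insert (B ℓ') ((Finset.image A Finset.univ).erase (A ℓ)) := by
    ext q
    simp only [Finset.mem_image, Finset.mem_univ, true_and, Finset.mem_insert, Finset.mem_erase]
    constructor
    · rintro ⟨i, hi⟩
      by_cases h : i = ℓ
      · subst h; rw [if_pos rfl] at hi; exact Or.inl hi.symm
      · rw [if_neg h] at hi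
        exact Or.inr ⟨by rw [← hi]; exact fun hc => h (hAinj hc), ⟨i, hi⟩⟩
    · rintro (h | ⟨hne, i, hi⟩)
      · exact ⟨ℓ, by rw [if_pos rfl, h]⟩
      · have : i ≠ ℓ := fun hc => hne (by rw [← hi, hc])
        exact ⟨i, by rw [if_neg this, hi]⟩
  rw [e2, hS, Finset.insert_erase hBmem]

lemma master_check_plus {nu mu out : Wt m} {A : Fin m → ℚ} {l₀ : Fin m} {n : ℕ}
    (hck : IsCheck m nu out) (hG : G0Dom m nu)
    (hAnu : (tilde m nu).2 = A)
    (hroot : (tilde m nu).1 = A l₀)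
    (hn : 0 < n) {v : ℚ} (hv : v = A l₀ - n) (hvpos : 0 < v)
    (hnew : ∀ j, j ≠ l₀ → v ≠ A j)
    (hmint : ∀ t : ℕ, 0 < t → t < n → ∃ j, j ≠ l₀ ∧ A l₀ - t = A j)
    (hGmu : G0Dom m mu)
    (hfst : (tilde m mu).1 = (tilde m nu).1 - n)
    (himg : Finset.image (fun i => |(tilde m mu).2 i|) Finset.univ
          = Finset.image (fun i => |if i = l₀ then v else A i|) Finset.univ) :
    mu = out := by
  obtain ⟨γ, hγ, a, hapos, hreg, hmin, hGout, w, hw⟩ := hck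
  have hγeq : γ = deltaW m + epsW l₀ := atypRoot_plus hG (by rw [hroot, hAnu]) hγ
  subst hγeq
  have hy : ∀ c : ℚ, tilde m (nu - c • (deltaW m + epsW l₀)) =
      ((tilde m nu).1 - c, fun i => if i = l₀ then A l₀ - c else A i) := by
    intro c; rw [tilde_sub_plus, hAnu]
  have hpos : ∀ i, (1/2:ℚ) ≤ A i := by rw [← hAnu]; exact dom_pos hG
  have hAinj : Function.Injective A := by rw [← hAnu]; exact (dom_anti hG).injective
  have hregn : Regular m (nu - (n:ℚ) • (deltaW m + epsW l₀)) := by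
    intro i j hij
    rw [hy] at hij
    simp only at hij
    by_cases hi : i = l₀ <;> by_cases hj : j = l₀
    · rw [hi, hj]
    · rw [if_pos hi, if_neg hj, ← hv, abs_of_pos hvpos,
        abs_of_pos (by linarith [hpos j])] at hij
      exact absurd hij (hnew j hj)
    · rw [if_neg hi, if_pos hj, ← hv, abs_of_pos hvpos,
        abs_of_pos (by linarith [hpos i])] at hij
      exact absurd hij.symm (hnew i hi)
    · rw [if_neg hi, if_neg hj, abs_of_pos (by linarith [hpos i]),
        abs_of_pos (by linarith [hpos j])] at hij
      exact hAinj hij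
  have han : a = n := by
    rcases lt_trichotomy a n with h | h | h
    · obtain ⟨j, hj, hval⟩ := hmint a hapos h
      exfalso
      apply hj
      apply hreg j l₀
      rw [hy]
      simp [hj, ← hval]
    · exact h
    · exact absurd hregn (hmin n hn h)
  subst han
  refine plus_unique hGout hw hGmu ?_ ?_
  · rw [hfst, hy]
  · rw [hy]
    simp only
    rw [himg]
    congr 1
    funext i
    by_cases h : i = l₀ <;> simp [h, hv]

end AuxLemmas3
section AuxLemmas4

variable {m : ℕ}

lemma master_check_minus {nu mu out : Wt m} {A : Fin m → ℚ} {l₀ : Fin m} {n : ℕ}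
    (hck : IsCheck m nu out) (hG : G0Dom m nu)
    (hAnu : (tilde m nu).2 = A)
    (hroot : (tilde m nu).1 = -A l₀)
    (hn : 0 < n) {v : ℚ} (hv : v = A l₀ + n) (hvpos : 0 < v)
    (hnew : ∀ j, j ≠ l₀ → v ≠ A j)
    (hmint : ∀ t : ℕ, 0 < t → t < n → ∃ j, j ≠ l₀ ∧ A l₀ + t = A j)
    (hGmu : G0Dom m mu)
    (hfst : (tilde m mu).1 = (tilde m nu).1 - n)
    (himg : Finset.image (fun i => |(tilde m mu).2 i|) Finset.univ
          = Finset.image (fun i => |if i = l₀ then v else A i|) Finset.univ) :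
    mu = out := by
  obtain ⟨γ, hγ, a, hapos, hreg, hmin, hGout, w, hw⟩ := hck
  have hγeq : γ = deltaW m - epsW l₀ := atypRoot_minus hG (by rw [hroot, hAnu]) hγ
  subst hγeq
  have hy : ∀ c : ℚ, tilde m (nu - c • (deltaW m - epsW l₀)) =
      ((tilde m nu).1 - c, fun i => if i = l₀ then A l₀ + c else A i) := by
    intro c; rw [tilde_sub_minus, hAnu]
  have hpos : ∀ i, (1/2:ℚ) ≤ A i := by rw [← hAnu]; exact dom_pos hG
  have hAinj : Function.Injective A := by rw [← hAnu]; exact (dom_anti hG).injective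
  have hregn : Regular m (nu - (n:ℚ) • (deltaW m - epsW l₀)) := by
    intro i j hij
    rw [hy] at hij
    simp only at hij
    by_cases hi : i = l₀ <;> by_cases hj : j = l₀
    · rw [hi, hj]
    · rw [if_pos hi, if_neg hj, ← hv, abs_of_pos hvpos,
        abs_of_pos (by linarith [hpos j])] at hij
      exact absurd hij (hnew j hj)
    · rw [if_neg hi, if_pos hj, ← hv, abs_of_pos hvpos,
        abs_of_pos (by linarith [hpos i])] at hij
      exact absurd hij.symm (hnew i hi)
    · rw [if_neg hi, if_neg hj, abs_of_pos (by linarith [hpos i]),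
        abs_of_pos (by linarith [hpos j])] at hij
      exact hAinj hij
  have han : a = n := by
    rcases lt_trichotomy a n with h | h | h
    · obtain ⟨j, hj, hval⟩ := hmint a hapos h
      exfalso
      apply hj
      apply hreg j l₀
      rw [hy]
      simp [hj, ← hval]
    · exact h
    · exact absurd hregn (hmin n hn h)
  subst han
  refine plus_unique hGout hw hGmu ?_ ?_
  · rw [hfst, hy]
  · rw [hy]
    simp only
    rw [himg]
    congr 1
    funext i
    by_cases h : i = l₀ <;> simp [h, hv]

lemma master_hat_minus {nu mu out : Wt m} {A : Fin m → ℚ} {l₀ : Fin m} {n : ℕ}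
    (hck : IsHat m nu out) (hG : G0Dom m nu)
    (hAnu : (tilde m nu).2 = A)
    (hroot : (tilde m nu).1 = -A l₀)
    (hn : 0 < n) {v : ℚ} (hv : v = A l₀ - n) (hvpos : 0 < v)
    (hnew : ∀ j, j ≠ l₀ → v ≠ A j)
    (hmint : ∀ t : ℕ, 0 < t → t < n → ∃ j, j ≠ l₀ ∧ A l₀ - t = A j)
    (hGmu : G0Dom m mu)
    (hfst : (tilde m mu).1 = (tilde m nu).1 + n)
    (himg : Finset.image (fun i => |(tilde m mu).2 i|) Finset.univ
          = Finset.image (fun i => |if i = l₀ then v else A i|) Finset.univ) :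
    mu = out := by
  obtain ⟨γ, hγ, a, hapos, hreg, hmin, hGout, w, hw⟩ := hck
  have hγeq : γ = deltaW m - epsW l₀ := atypRoot_minus hG (by rw [hroot, hAnu]) hγ
  subst hγeq
  have hy : ∀ c : ℚ, tilde m (nu + c • (deltaW m - epsW l₀)) =
      ((tilde m nu).1 + c, fun i => if i = l₀ then A l₀ - c else A i) := by
    intro c; rw [tilde_add_minus, hAnu]
  have hpos : ∀ i, (1/2:ℚ) ≤ A i := by rw [← hAnu]; exact dom_pos hG
  have hAinj : Function.Injective A := by rw [← hAnu]; exact (dom_anti hG).injective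
  have hregn : Regular m (nu + (n:ℚ) • (deltaW m - epsW l₀)) := by
    intro i j hij
    rw [hy] at hij
    simp only at hij
    by_cases hi : i = l₀ <;> by_cases hj : j = l₀
    · rw [hi, hj]
    · rw [if_pos hi, if_neg hj, ← hv, abs_of_pos hvpos,
        abs_of_pos (by linarith [hpos j])] at hij
      exact absurd hij (hnew j hj)
    · rw [if_neg hi, if_pos hj, ← hv, abs_of_pos hvpos,
        abs_of_pos (by linarith [hpos i])] at hij
      exact absurd hij.symm (hnew i hi)
    · rw [if_neg hi, if_neg hj, abs_of_pos (by linarith [hpos i]),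
        abs_of_pos (by linarith [hpos j])] at hij
      exact hAinj hij
  have han : a = n := by
    rcases lt_trichotomy a n with h | h | h
    · obtain ⟨j, hj, hval⟩ := hmint a hapos h
      exfalso
      apply hj
      apply hreg j l₀
      rw [hy]
      simp [hj, ← hval]
    · exact h
    · exact absurd hregn (hmin n hn h)
  subst han
  refine plus_unique hGout hw hGmu ?_ ?_
  · rw [hfst, hy]
  · rw [hy]
    simp only
    rw [himg]
    congr 1
    funext i
    by_cases h : i = l₀ <;> simp [h, hv]

end AuxLemmas4
section Matching

variable {m : ℕ} {A B : Fin m → ℚ} {ℓ ℓ' : Fin m}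

lemma gap2 (hAg : ∀ i j : Fin m, (i:ℕ) < (j:ℕ) → A j + 1 ≤ A i)
    {i j : Fin m} (h : (i:ℕ)+2 ≤ (j:ℕ)) : A j + 2 ≤ A i := by
  have hmid : (i:ℕ)+1 < m := lt_of_le_of_lt (by omega) j.isLt
  have h1 := hAg i ⟨(i:ℕ)+1, hmid⟩ (by simp)
  have h2 := hAg ⟨(i:ℕ)+1, hmid⟩ j (by simpa using by omega)
  linarith

lemma inj_of_gap (hAg : ∀ i j : Fin m, (i:ℕ) < (j:ℕ) → A j + 1 ≤ A i) :
    Function.Injective A := by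
  intro i j h
  rcases lt_trichotomy (i:ℕ) (j:ℕ) with hc | hc | hc
  · have := hAg i j hc; exfalso; linarith
  · exact Fin.ext hc
  · have := hAg j i hc; exfalso; linarith

lemma near (hAg : ∀ i j : Fin m, (i:ℕ) < (j:ℕ) → A j + 1 ≤ A i)
    (hd1 : ∀ i, A i - 1 ≤ B i ∧ B i ≤ A i + 1)
    {k j : Fin m} (h : B k = A j) : (j:ℕ) ≤ (k:ℕ)+1 ∧ (k:ℕ) ≤ (j:ℕ)+1 := by
  constructor
  · by_contra hc
    have := gap2 hAg (show (k:ℕ)+2 ≤ (j:ℕ) by omega)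
    have := (hd1 k).1
    linarith
  · by_contra hc
    have := gap2 hAg (show (j:ℕ)+2 ≤ (k:ℕ) by omega)
    have := (hd1 k).2
    linarith

lemma memS_A (hAg : ∀ i j : Fin m, (i:ℕ) < (j:ℕ) → A j + 1 ≤ A i)
    (hS : (Finset.image A Finset.univ).erase (A ℓ)
        = (Finset.image B Finset.univ).erase (B ℓ'))
    {j : Fin m} (hj : j ≠ ℓ) : ∃ k, k ≠ ℓ' ∧ B k = A j := by
  have h1 : A j ∈ (Finset.image A Finset.univ).erase (A ℓ) :=
    Finset.mem_erase.mpr ⟨fun hc => hj (inj_of_gap hAg hc),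
      Finset.mem_image_of_mem _ (Finset.mem_univ _)⟩
  rw [hS] at h1
  obtain ⟨hne, hmem⟩ := Finset.mem_erase.mp h1
  obtain ⟨k, _, hk⟩ := Finset.mem_image.mp hmem
  exact ⟨k, fun hc => hne (by rw [← hk, hc]), hk⟩

lemma memS_B (hBg : ∀ i j : Fin m, (i:ℕ) < (j:ℕ) → B j + 1 ≤ B i)
    (hS : (Finset.image A Finset.univ).erase (A ℓ)
        = (Finset.image B Finset.univ).erase (B ℓ'))
    {k : Fin m} (hk : k ≠ ℓ') : ∃ j, j ≠ ℓ ∧ A j = B k := by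
  have h1 : B k ∈ (Finset.image B Finset.univ).erase (B ℓ') :=
    Finset.mem_erase.mpr ⟨fun hc => hk (inj_of_gap hBg hc),
      Finset.mem_image_of_mem _ (Finset.mem_univ _)⟩
  rw [← hS] at h1
  obtain ⟨hne, hmem⟩ := Finset.mem_erase.mp h1
  obtain ⟨j, _, hj⟩ := Finset.mem_image.mp hmem
  exact ⟨j, fun hc => hne (by rw [← hj, hc]), hj⟩

lemma match_low (hAg : ∀ i j : Fin m, (i:ℕ) < (j:ℕ) → A j + 1 ≤ A i)
    (hBg : ∀ i j : Fin m, (i:ℕ) < (j:ℕ) → B j + 1 ≤ B i)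
    (hd1 : ∀ i, A i - 1 ≤ B i ∧ B i ≤ A i + 1)
    (hS : (Finset.image A Finset.univ).erase (A ℓ)
        = (Finset.image B Finset.univ).erase (B ℓ')) :
    ∀ n : ℕ, ∀ hn : n < m, n < (ℓ:ℕ) → n < (ℓ':ℕ) → B ⟨n, hn⟩ = A ⟨n, hn⟩ := by
  intro n
  induction n using Nat.strong_induction_on with
  | _ n IH =>
    intro hn hnℓ hnℓ'
    set i : Fin m := ⟨n, hn⟩ with hi
    have hin : (i:ℕ) = n := rfl
    obtain ⟨k, hk, hBk⟩ := memS_A hAg hS (show i ≠ ℓ from Fin.ne_of_val_ne (by omega))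
    have hb := near hAg hd1 hBk
    rcases (by omega : (k:ℕ)+1 = n ∨ (k:ℕ) = n ∨ (k:ℕ) = n+1) with hkc | hkc | hkc
    · exfalso
      have hk' : B k = A k := by
        have := IH (k:ℕ) (by omega) k.isLt (by omega) (by omega)
        simpa using this
      have hAA : A k = A i := by rw [← hk', hBk]
      have := hAg k i (by omega)
      linarith
    · have : k = i := Fin.ext (by omega)
      rw [this] at hBk; exact hBk
    · exfalso
      have h1 : A i + 1 ≤ B i := by
        have hgB := hBg i k (by omega)
        rw [hBk] at hgB
        linarith
      have h2 : B i = A i + 1 := le_antisymm (hd1 i).2 h1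
      obtain ⟨j, hj, hAj⟩ := memS_B hBg hS (show i ≠ ℓ' from Fin.ne_of_val_ne (by omega))
      rw [h2] at hAj
      have hlt : (j:ℕ) < n := by
        rcases lt_trichotomy n (j:ℕ) with hc | hc | hc
        · have := hAg i j hc; exfalso; linarith
        · exfalso; have : j = i := Fin.ext hc.symm; rw [this] at hAj; linarith
        · exact hc
      have hji : (j:ℕ)+1 = n := by
        by_contra hne2
        have := gap2 hAg (show (j:ℕ)+2 ≤ (i:ℕ) by omega)
        linarith
      have hBj : B j = A j := by
        have := IH (j:ℕ) (by omega) j.isLt (by omega) (by omega)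
        simpa using this
      have := hBg j i (by omega)
      rw [hBj, hAj] at this
      linarith

lemma match_high (hAg : ∀ i j : Fin m, (i:ℕ) < (j:ℕ) → A j + 1 ≤ A i)
    (hBg : ∀ i j : Fin m, (i:ℕ) < (j:ℕ) → B j + 1 ≤ B i)
    (hd1 : ∀ i, A i - 1 ≤ B i ∧ B i ≤ A i + 1)
    (hS : (Finset.image A Finset.univ).erase (A ℓ)
        = (Finset.image B Finset.univ).erase (B ℓ')) :
    ∀ d n : ℕ, ∀ hn : n < m, m - n = d → (ℓ:ℕ) < n → (ℓ':ℕ) < n → B ⟨n, hn⟩ = A ⟨n, hn⟩ := by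
  intro d
  induction d using Nat.strong_induction_on with
  | _ d IH =>
    intro n hn hd hnℓ hnℓ'
    set i : Fin m := ⟨n, hn⟩ with hi
    have hin : (i:ℕ) = n := rfl
    obtain ⟨k, hk, hBk⟩ := memS_A hAg hS (show i ≠ ℓ from Fin.ne_of_val_ne (by omega))
    have hb := near hAg hd1 hBk
    rcases (by omega : (k:ℕ) = n ∨ (k:ℕ) = n+1 ∨ (k:ℕ)+1 = n) with hkc | hkc | hkc
    · have : k = i := Fin.ext (by omega)
      rw [this] at hBk; exact hBk
    · exfalso
      have hk' : B k = A k := by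
        have := IH (m - (k:ℕ)) (by omega) (k:ℕ) k.isLt (by omega) (by omega) (by omega)
        simpa using this
      have hAA : A k = A i := by rw [← hk', hBk]
      have := hAg i k (by omega)
      linarith
    · exfalso
      have h1 : B i ≤ A i - 1 := by
        have hgB := hBg k i (by omega)
        rw [hBk] at hgB
        linarith
      have h2 : B i = A i - 1 := le_antisymm h1 (by linarith [(hd1 i).1])
      obtain ⟨j, hj, hAj⟩ := memS_B hBg hS (show i ≠ ℓ' from Fin.ne_of_val_ne (by omega))
      rw [h2] at hAj
      have hgt : n < (j:ℕ) := by
        rcases lt_trichotomy (j:ℕ) n with hc | hc | hc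
        · have := hAg j i hc; exfalso; linarith
        · exfalso; have : j = i := Fin.ext hc; rw [this] at hAj; linarith
        · exact hc
      have hji : (j:ℕ) = n+1 := by
        by_contra hne2
        have := gap2 hAg (show (i:ℕ)+2 ≤ (j:ℕ) by omega)
        linarith
      have hBj : B j = A j := by
        have := IH (m - (j:ℕ)) (by omega) (j:ℕ) j.isLt (by omega) (by omega) (by omega)
        simpa using this
      have := hBg i j (by omega)
      rw [hBj, hAj] at this
      linarith

end Matching
section Matching2

variable {m : ℕ} {A B : Fin m → ℚ} {ℓ ℓ' : Fin m}

lemma match_mid_lt (hAg : ∀ i j : Fin m, (i:ℕ) < (j:ℕ) → A j + 1 ≤ A i)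
    (hBg : ∀ i j : Fin m, (i:ℕ) < (j:ℕ) → B j + 1 ≤ B i)
    (hd1 : ∀ i, A i - 1 ≤ B i ∧ B i ≤ A i + 1)
    (hS : (Finset.image A Finset.univ).erase (A ℓ)
        = (Finset.image B Finset.univ).erase (B ℓ')) :
    ∀ d : ℕ, ∀ i i1 : Fin m, (i1:ℕ) = (i:ℕ)+1 → (ℓ':ℕ) - (i:ℕ) = d →
      (ℓ:ℕ) ≤ (i:ℕ) → (i:ℕ) < (ℓ':ℕ) → B i = A i1 := by
  intro d
  induction d using Nat.strong_induction_on with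
  | _ d IH =>
    intro i i1 hi1 hd hn1 hn2
    obtain ⟨k, hk, hBk⟩ := memS_A hAg hS (show i1 ≠ ℓ from Fin.ne_of_val_ne (by omega))
    have hb := near hAg hd1 hBk
    have hkℓ' : (k:ℕ) ≠ (ℓ':ℕ) := fun hc => hk (Fin.ext hc)
    rcases (by omega : (k:ℕ) = (i:ℕ) ∨ (k:ℕ) = (i:ℕ)+1 ∨ (k:ℕ) = (i:ℕ)+2) with hkc | hkc | hkc
    · have : k = i := Fin.ext hkc
      rw [this] at hBk; exact hBk
    · exfalso
      have h2m : (i:ℕ)+2 < m := by have := ℓ'.isLt; omega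
      have hIH : B k = A ⟨(i:ℕ)+2, h2m⟩ :=
        IH ((ℓ':ℕ) - (k:ℕ)) (by omega) k ⟨(i:ℕ)+2, h2m⟩ (by simp; omega) rfl
          (by omega) (by omega)
      have hgap := hAg i1 ⟨(i:ℕ)+2, h2m⟩ (by simp; omega)
      rw [hBk] at hIH
      linarith
    · exfalso
      rcases (by omega : (k:ℕ) < (ℓ':ℕ) ∨ (ℓ':ℕ) < (k:ℕ)) with hc | hc
      · have h3m : (i:ℕ)+3 < m := by have := ℓ'.isLt; omega
        have hIH : B k = A ⟨(i:ℕ)+3, h3m⟩ :=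
          IH ((ℓ':ℕ) - (k:ℕ)) (by omega) k ⟨(i:ℕ)+3, h3m⟩ (by simp; omega) rfl
            (by omega) (by omega)
        have hgap := hAg i1 ⟨(i:ℕ)+3, h3m⟩ (by simp; omega)
        rw [hBk] at hIH
        linarith
      · have hkm : B k = A k := by
          have := match_high hAg hBg hd1 hS (m - (k:ℕ)) (k:ℕ) k.isLt (by omega)
            (by omega) (by omega)
          simpa using this
        rw [hBk] at hkm
        have hgap := hAg i1 k (by omega)
        linarith

lemma match_mid_gt (hAg : ∀ i j : Fin m, (i:ℕ) < (j:ℕ) → A j + 1 ≤ A i)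
    (hBg : ∀ i j : Fin m, (i:ℕ) < (j:ℕ) → B j + 1 ≤ B i)
    (hd1 : ∀ i, A i - 1 ≤ B i ∧ B i ≤ A i + 1)
    (hS : (Finset.image A Finset.univ).erase (A ℓ)
        = (Finset.image B Finset.univ).erase (B ℓ')) :
    ∀ n : ℕ, ∀ i i1 : Fin m, (i:ℕ) = n → (i1:ℕ)+1 = (i:ℕ) →
      (ℓ':ℕ) < (i:ℕ) → (i:ℕ) ≤ (ℓ:ℕ) → B i = A i1 := by
  intro n
  induction n using Nat.strong_induction_on with
  | _ n IH =>
    intro i i1 hin hi1 hn1 hn2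
    obtain ⟨k, hk, hBk⟩ := memS_A hAg hS (show i1 ≠ ℓ from Fin.ne_of_val_ne (by omega))
    have hb := near hAg hd1 hBk
    have hkℓ' : (k:ℕ) ≠ (ℓ':ℕ) := fun hc => hk (Fin.ext hc)
    rcases (by omega : (k:ℕ) = (i:ℕ) ∨ (k:ℕ)+1 = (i:ℕ) ∨ (k:ℕ)+2 = (i:ℕ)) with hkc | hkc | hkc
    · have : k = i := Fin.ext hkc
      rw [this] at hBk; exact hBk
    · exfalso
      rcases (by omega : (ℓ':ℕ) < (k:ℕ) ∨ (ℓ':ℕ) = (k:ℕ)) with hc | hc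
      · have h2m : (i:ℕ)-2 < m := by omega
        have hIH : B k = A ⟨(i:ℕ)-2, h2m⟩ :=
          IH (k:ℕ) (by omega) k ⟨(i:ℕ)-2, h2m⟩ rfl (by simp; omega) (by omega) (by omega)
        have hgap := hAg ⟨(i:ℕ)-2, h2m⟩ i1 (by simp; omega)
        rw [hBk] at hIH
        linarith
      · exact hkℓ' (by omega)
    · exfalso
      rcases (by omega : (ℓ':ℕ) < (k:ℕ) ∨ (ℓ':ℕ) = (k:ℕ) ∨ (k:ℕ) < (ℓ':ℕ)) with hc | hc | hc
      · have h3m : (i:ℕ)-3 < m := by omega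
        have hIH : B k = A ⟨(i:ℕ)-3, h3m⟩ :=
          IH (k:ℕ) (by omega) k ⟨(i:ℕ)-3, h3m⟩ rfl (by simp; omega) (by omega) (by omega)
        have hgap := hAg ⟨(i:ℕ)-3, h3m⟩ i1 (by simp; omega)
        rw [hBk] at hIH
        linarith
      · exact hkℓ' (by omega)
      · have hkm : B k = A k := by
          have := match_low hAg hBg hd1 hS (k:ℕ) k.isLt (by omega) (by omega)
          simpa using this
        rw [hBk] at hkm
        have hgap := hAg k i1 (by omega)
        linarith

end Matching2
section Chains

variable {m : ℕ} {A B : Fin m → ℚ} {ℓ ℓ' : Fin m}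

lemma chain_lt (hAg : ∀ i j : Fin m, (i:ℕ) < (j:ℕ) → A j + 1 ≤ A i)
    (hBg : ∀ i j : Fin m, (i:ℕ) < (j:ℕ) → B j + 1 ≤ B i)
    (hd1 : ∀ i, A i - 1 ≤ B i ∧ B i ≤ A i + 1)
    (hS : (Finset.image A Finset.univ).erase (A ℓ)
        = (Finset.image B Finset.univ).erase (B ℓ')) :
    ∀ t : ℕ, ∀ i : Fin m, (i:ℕ) = (ℓ:ℕ)+t → (i:ℕ) ≤ (ℓ':ℕ) → A i = A ℓ - t := by
  intro t
  induction t with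
  | zero =>
    intro i h1 h2
    have : i = ℓ := Fin.ext (by omega)
    rw [this]; simp
  | succ t IH =>
    intro i h1 h2
    have hipm : (i:ℕ)-1 < m := by omega
    set ip : Fin m := ⟨(i:ℕ)-1, hipm⟩ with hipdef
    have hipv : (ip:ℕ) = (i:ℕ)-1 := rfl
    have hIp : A ip = A ℓ - t := IH ip (by omega) (by omega)
    have hstep : B ip = A i :=
      match_mid_lt hAg hBg hd1 hS ((ℓ':ℕ) - (ip:ℕ)) ip i (by omega) rfl (by omega) (by omega)
    have hlo := (hd1 ip).1
    have hgap := hAg ip i (by omega)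
    push_cast
    linarith

lemma chain_gt (hAg : ∀ i j : Fin m, (i:ℕ) < (j:ℕ) → A j + 1 ≤ A i)
    (hBg : ∀ i j : Fin m, (i:ℕ) < (j:ℕ) → B j + 1 ≤ B i)
    (hd1 : ∀ i, A i - 1 ≤ B i ∧ B i ≤ A i + 1)
    (hS : (Finset.image A Finset.univ).erase (A ℓ)
        = (Finset.image B Finset.univ).erase (B ℓ')) :
    ∀ t : ℕ, ∀ i : Fin m, (i:ℕ)+t = (ℓ:ℕ) → (ℓ':ℕ) ≤ (i:ℕ) → A i = A ℓ + t := by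
  intro t
  induction t with
  | zero =>
    intro i h1 h2
    have : i = ℓ := Fin.ext (by omega)
    rw [this]; simp
  | succ t IH =>
    intro i h1 h2
    have hipm : (i:ℕ)+1 < m := by have := ℓ.isLt; omega
    set ip : Fin m := ⟨(i:ℕ)+1, hipm⟩ with hipdef
    have hipv : (ip:ℕ) = (i:ℕ)+1 := rfl
    have hIp : A ip = A ℓ + t := IH ip (by omega) (by omega)
    have hstep : B ip = A i :=
      match_mid_gt hAg hBg hd1 hS (ip:ℕ) ip i rfl (by omega) (by omega) (by omega)
    have hhi := (hd1 ip).2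
    have hgap := hAg i ip (by omega)
    push_cast
    linarith

end Chains

/-- combinatorial content of Lemma 3.8(1) for `k = 2m+1`:
if `λ, μ` are integral `g₀`-dominant atypical weights with the same
atypicality type and
`λ − μ = θδ + Σᵢ θᵢ(δ − εᵢ) + Σᵢ θ̄ᵢ(δ + εᵢ)` with `θ ∈ ℤ≥0`,
`θᵢ, θ̄ᵢ ∈ {0,1}`, then `μ ∈ {λ, λˇ, λ^σ, (λ^σ)ˇ, (λ^σ)^}`. -/
theorem primitive_weight_candidates (m : ℕ) (hm : 1 ≤ m) (lam mu : Wt m)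
    (hl1 : Integral m lam) (hl2 : G0Dom m lam) (hl3 : Atypical m lam)
    (hmu1 : Integral m mu) (hmu2 : G0Dom m mu) (hmu3 : Atypical m mu)
    (htype : atypType m lam = atypType m mu)
    (θ : ℕ) (θm θp : Fin m → ℕ)
    (hθm : ∀ i, θm i ≤ 1) (hθp : ∀ i, θp i ≤ 1)
    (hdiff : lam - mu =
      (θ : ℚ) • deltaW m + (∑ i, (θm i : ℚ) • (deltaW m - epsW i)) +
        ∑ i, (θp i : ℚ) • (deltaW m + epsW i))
    (lamc lamsc lamsh : Wt m)
    (hc : IsCheck m lam lamc)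
    (hsc : IsCheck m (sigmaW m lam) lamsc)
    (hsh : IsHat m (sigmaW m lam) lamsh) :
    mu = lam ∨ mu = lamc ∨ mu = sigmaW m lam ∨ mu = lamsc ∨ mu = lamsh := by
  obtain ⟨ℓ, hℓ⟩ := hl3
  obtain ⟨ℓ', hℓ'⟩ := hmu3
  -- basic structure facts
  have hApos : ∀ i, (1/2:ℚ) ≤ (tilde m lam).2 i := dom_pos hl2
  have hBpos : ∀ i, (1/2:ℚ) ≤ (tilde m mu).2 i := dom_pos hmu2
  have hAg : ∀ i j : Fin m, (i:ℕ) < (j:ℕ) →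
      (tilde m lam).2 j + 1 ≤ (tilde m lam).2 i := fun i j h => dom_gap hl2 h
  have hBg : ∀ i j : Fin m, (i:ℕ) < (j:ℕ) →
      (tilde m mu).2 j + 1 ≤ (tilde m mu).2 i := fun i j h => dom_gap hmu2 h
  -- components of hdiff
  have hfst0 : lam.1 - mu.1 = (θ:ℚ) + (∑ i, (θm i:ℚ)) + (∑ i, (θp i:ℚ)) := by
    have h := congrArg Prod.fst hdiff
    simpa only [Prod.fst_sub, Prod.fst_add, Prod.smul_fst, Prod.fst_sum, deltaW, epsW,
      smul_eq_mul, mul_one, mul_zero, add_zero, sub_zero, zero_add, mul_sub, mul_add] using h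
  have hsnd0 : ∀ i, lam.2 i - mu.2 i = -(θm i:ℚ) + (θp i:ℚ) := by
    intro i
    have h := congrFun (congrArg Prod.snd hdiff) i
    simp only [Prod.snd_sub, Prod.snd_add, Prod.smul_snd, Prod.snd_sum, deltaW, epsW,
      Pi.sub_apply, Pi.add_apply, Pi.smul_apply, Pi.zero_apply, Finset.sum_apply,
      smul_eq_mul, mul_one, mul_zero, zero_sub, zero_add, Pi.neg_apply, mul_neg,
      Finset.sum_neg_distrib] at h
    rw [show (∑ x, (θm x:ℚ) * (Pi.single x 1 : Fin m → ℚ) i) = (θm i:ℚ) from by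
        simp [Pi.single_apply, mul_ite],
      show (∑ x, (θp x:ℚ) * (Pi.single x 1 : Fin m → ℚ) i) = (θp i:ℚ) from by
        simp [Pi.single_apply, mul_ite]] at h
    linarith
  have hBi : ∀ i, (tilde m mu).2 i = (tilde m lam).2 i + ((θm i:ℚ) - (θp i:ℚ)) := by
    intro i
    have h := hsnd0 i
    simp only [tilde]
    linarith
  have hd1 : ∀ i, (tilde m lam).2 i - 1 ≤ (tilde m mu).2 i ∧
      (tilde m mu).2 i ≤ (tilde m lam).2 i + 1 := by
    intro i
    have h := hBi i
    have h1 : ((θm i:ℚ)) ≤ 1 := by exact_mod_cast hθm i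
    have h2 : ((θp i:ℚ)) ≤ 1 := by exact_mod_cast hθp i
    have h3 : (0:ℚ) ≤ (θm i:ℚ) := by positivity
    have h4 : (0:ℚ) ≤ (θp i:ℚ) := by positivity
    constructor <;> linarith
  set T : ℚ := (θ:ℚ) + (∑ i, (θm i:ℚ)) + (∑ i, (θp i:ℚ)) with hTdef
  have hTnn : 0 ≤ T := by
    have h1 : (0:ℚ) ≤ (θ:ℚ) := by positivity
    have h2 : (0:ℚ) ≤ ∑ i, (θm i:ℚ) := Finset.sum_nonneg fun i _ => by positivity
    have h3 : (0:ℚ) ≤ ∑ i, (θp i:ℚ) := Finset.sum_nonneg fun i _ => by positivity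
    rw [hTdef]; linarith
  have hq : (tilde m mu).1 = (tilde m lam).1 - T := by
    simp only [tilde]
    rw [hTdef]
    linarith [hfst0]
  have hS : ((Finset.image (tilde m lam).2 Finset.univ).erase ((tilde m lam).2 ℓ))
      = ((Finset.image (tilde m mu).2 Finset.univ).erase ((tilde m mu).2 ℓ')) := by
    have h := htype
    simp only [atypType] at h
    rw [hℓ, hℓ'] at h
    exact h
  have hBA : ∀ j, j ≠ ℓ → (tilde m lam).2 j ≠ (tilde m mu).2 ℓ' := by
    intro j hj
    have h1 : (tilde m lam).2 j ∈
        (Finset.image (tilde m lam).2 Finset.univ).erase ((tilde m lam).2 ℓ) :=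
      Finset.mem_erase.mpr ⟨fun hc => hj (inj_of_gap hAg hc),
        Finset.mem_image_of_mem _ (Finset.mem_univ _)⟩
    rw [hS] at h1
    exact (Finset.mem_erase.mp h1).1
  have hsigfst : (tilde m (sigmaW m lam)).1 = -(tilde m lam).1 := by rw [tilde_sigma]
  have hsigsnd : (tilde m (sigmaW m lam)).2 = (tilde m lam).2 := by rw [tilde_sigma]
  have hBℓ'pos : (0:ℚ) < (tilde m mu).2 ℓ' := lt_of_lt_of_le (by norm_num) (hBpos ℓ')
  rcases (abs_eq (le_trans (by norm_num) (hApos ℓ))).mp hℓ with hp | hp <;>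
    rcases (abs_eq (le_trans (by norm_num) (hBpos ℓ'))).mp hℓ' with hqs | hqs <;>
      rcases lt_trichotomy (ℓ:ℕ) (ℓ':ℕ) with hll | hll | hll
  · -- p = Al, q = Bl', l < l' : mu = lamc
    set n : ℕ := (ℓ':ℕ) - (ℓ:ℕ) + 1 with hndef
    have hn0 : 0 < n := by omega
    have hn1q : (1:ℚ) ≤ (n:ℚ) := by exact_mod_cast hn0
    have hncast : (n:ℚ) = ((ℓ':ℕ):ℚ) - ((ℓ:ℕ):ℚ) + 1 := by
      rw [hndef]; push_cast [Nat.cast_sub hll.le]; ring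
    have hchain := chain_lt hAg hBg hd1 hS
    have hsubcast : ((((ℓ':ℕ) - (ℓ:ℕ)) : ℕ):ℚ) = ((ℓ':ℕ):ℚ) - ((ℓ:ℕ):ℚ) := by
      push_cast [Nat.cast_sub hll.le]; ring
    have hAl' : (tilde m lam).2 ℓ' = (tilde m lam).2 ℓ - ((((ℓ':ℕ) - (ℓ:ℕ)) : ℕ):ℚ) :=
      hchain ((ℓ':ℕ) - (ℓ:ℕ)) ℓ' (by omega) (by omega)
    have hl'm1 : (ℓ':ℕ) - 1 < m := by have := ℓ'.isLt; omega
    have hstep : (tilde m mu).2 ⟨(ℓ':ℕ)-1, hl'm1⟩ = (tilde m lam).2 ℓ' :=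
      match_mid_lt hAg hBg hd1 hS ((ℓ':ℕ) - ((ℓ':ℕ)-1)) ⟨(ℓ':ℕ)-1, hl'm1⟩ ℓ'
        (by simp; omega) rfl (by simp; omega) (by simp; omega)
    have hBstep := hBg ⟨(ℓ':ℕ)-1, hl'm1⟩ ℓ' (by simp; omega)
    have hBl'v : (tilde m mu).2 ℓ' = (tilde m lam).2 ℓ - (n:ℚ) := by
      have hlow := (hd1 ℓ').1
      rw [hncast]
      rw [hsubcast] at hAl'
      linarith
    have hmint : ∀ t : ℕ, 0 < t → t < n →
        ∃ j, j ≠ ℓ ∧ (tilde m lam).2 ℓ - (t:ℚ) = (tilde m lam).2 j := by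
      intro t ht1 ht2
      have hjm : (ℓ:ℕ) + t < m := by have := ℓ'.isLt; omega
      refine ⟨⟨(ℓ:ℕ)+t, hjm⟩, Fin.ne_of_val_ne (by simp; omega), ?_⟩
      have := hchain t ⟨(ℓ:ℕ)+t, hjm⟩ rfl (by simp; omega)
      linarith
    right; left
    exact master_check_plus hc hl2 rfl hp hn0 hBl'v hBℓ'pos
      (fun j hj => Ne.symm (hBA j hj)) hmint hmu2
      (by rw [hqs, hBl'v, hp])
      (image_abs_eq hApos hBpos (inj_of_gap hAg) hS ((tilde m mu).2 ℓ') rfl)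
  · -- p = Al, q = Bl, l = l'
    have hee : ℓ' = ℓ := Fin.ext hll.symm
    subst hee
    have hBoff : ∀ i, i ≠ ℓ' → (tilde m mu).2 i = (tilde m lam).2 i := by
      intro i hi
      rcases lt_or_gt_of_ne (fun hc : (i:ℕ) = (ℓ':ℕ) => hi (Fin.ext hc)) with h | h
      · have := match_low hAg hBg hd1 hS (i:ℕ) i.isLt h h
        simpa using this
      · have := match_high hAg hBg hd1 hS (m - (i:ℕ)) (i:ℕ) i.isLt rfl h h
        simpa using this
    rcases Nat.le_one_iff_eq_zero_or_eq_one.mp (hθm ℓ') with h1 | h1 <;>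
      rcases Nat.le_one_iff_eq_zero_or_eq_one.mp (hθp ℓ') with h2 | h2
    · have hBv : (tilde m mu).2 ℓ' = (tilde m lam).2 ℓ' := by
        rw [hBi ℓ', h1, h2]; push_cast; ring
      left
      apply tilde_inj
      refine Prod.ext ?_ ?_
      · rw [hqs, hBv, ← hp]
      · funext i
        by_cases hi : i = ℓ'
        · rw [hi, hBv]
        · exact hBoff i hi
    · have hBv : (tilde m mu).2 ℓ' = (tilde m lam).2 ℓ' - ((1:ℕ):ℚ) := by
        rw [hBi ℓ', h1, h2]; push_cast; ring
      right; left
      exact master_check_plus hc hl2 rfl hp one_pos hBv hBℓ'pos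
        (fun j hj => Ne.symm (hBA j hj)) (fun t ht1 ht2 => absurd ht2 (by omega)) hmu2
        (by rw [hqs, hBv, hp])
        (image_abs_eq hApos hBpos (inj_of_gap hAg) hS ((tilde m mu).2 ℓ') rfl)
    · exfalso
      have hBv : (tilde m mu).2 ℓ' = (tilde m lam).2 ℓ' + 1 := by
        rw [hBi ℓ', h1, h2]; push_cast; ring
      linarith [hq, hp, hqs, hBv, hTnn]
    · have hBv : (tilde m mu).2 ℓ' = (tilde m lam).2 ℓ' := by
        rw [hBi ℓ', h1, h2]; push_cast; ring
      left
      apply tilde_inj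
      refine Prod.ext ?_ ?_
      · rw [hqs, hBv, ← hp]
      · funext i
        by_cases hi : i = ℓ'
        · rw [hi, hBv]
        · exact hBoff i hi
  · -- p = Al, q = Bl', l > l' : contradiction
    exfalso
    set n : ℕ := (ℓ:ℕ) - (ℓ':ℕ) + 1 with hndef
    have hn0 : 0 < n := by omega
    have hn1q : (1:ℚ) ≤ (n:ℚ) := by exact_mod_cast hn0
    have hncast : (n:ℚ) = ((ℓ:ℕ):ℚ) - ((ℓ':ℕ):ℚ) + 1 := by
      rw [hndef]; push_cast [Nat.cast_sub hll.le]; ring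
    have hchain := chain_gt hAg hBg hd1 hS
    have hsubcast : ((((ℓ:ℕ) - (ℓ':ℕ)) : ℕ):ℚ) = ((ℓ:ℕ):ℚ) - ((ℓ':ℕ):ℚ) := by
      push_cast [Nat.cast_sub hll.le]; ring
    have hAl' : (tilde m lam).2 ℓ' = (tilde m lam).2 ℓ + ((((ℓ:ℕ) - (ℓ':ℕ)) : ℕ):ℚ) :=
      hchain ((ℓ:ℕ) - (ℓ':ℕ)) ℓ' (by omega) (by omega)
    have hl'p1 : (ℓ':ℕ) + 1 < m := by have := ℓ.isLt; omega
    have hstep : (tilde m mu).2 ⟨(ℓ':ℕ)+1, hl'p1⟩ = (tilde m lam).2 ℓ' :=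
      match_mid_gt hAg hBg hd1 hS ((ℓ':ℕ)+1) ⟨(ℓ':ℕ)+1, hl'p1⟩ ℓ'
        rfl (by simp) (by simp) (by simp; omega)
    have hBstep := hBg ℓ' ⟨(ℓ':ℕ)+1, hl'p1⟩ (by simp)
    have hBl'v : (tilde m mu).2 ℓ' = (tilde m lam).2 ℓ + (n:ℚ) := by
      have hup := (hd1 ℓ').2
      rw [hncast]
      rw [hsubcast] at hAl'
      linarith
    have hmint : ∀ t : ℕ, 0 < t → t < n →
        ∃ j, j ≠ ℓ ∧ (tilde m lam).2 ℓ + (t:ℚ) = (tilde m lam).2 j := by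
      intro t ht1 ht2
      have hjm : (ℓ:ℕ) - t < m := by have := ℓ.isLt; omega
      refine ⟨⟨(ℓ:ℕ)-t, hjm⟩, Fin.ne_of_val_ne (by simp; omega), ?_⟩
      have := hchain t ⟨(ℓ:ℕ)-t, hjm⟩ (by simp; omega) (by simp; omega)
      linarith
    linarith [hq, hp, hqs, hBl'v, hTnn, hn1q]
  · -- p = Al, q = -Bl', l < l' : mu = lamsh
    set n : ℕ := (ℓ':ℕ) - (ℓ:ℕ) + 1 with hndef
    have hn0 : 0 < n := by omega
    have hn1q : (1:ℚ) ≤ (n:ℚ) := by exact_mod_cast hn0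
    have hncast : (n:ℚ) = ((ℓ':ℕ):ℚ) - ((ℓ:ℕ):ℚ) + 1 := by
      rw [hndef]; push_cast [Nat.cast_sub hll.le]; ring
    have hchain := chain_lt hAg hBg hd1 hS
    have hsubcast : ((((ℓ':ℕ) - (ℓ:ℕ)) : ℕ):ℚ) = ((ℓ':ℕ):ℚ) - ((ℓ:ℕ):ℚ) := by
      push_cast [Nat.cast_sub hll.le]; ring
    have hAl' : (tilde m lam).2 ℓ' = (tilde m lam).2 ℓ - ((((ℓ':ℕ) - (ℓ:ℕ)) : ℕ):ℚ) :=
      hchain ((ℓ':ℕ) - (ℓ:ℕ)) ℓ' (by omega) (by omega)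
    have hl'm1 : (ℓ':ℕ) - 1 < m := by have := ℓ'.isLt; omega
    have hstep : (tilde m mu).2 ⟨(ℓ':ℕ)-1, hl'm1⟩ = (tilde m lam).2 ℓ' :=
      match_mid_lt hAg hBg hd1 hS ((ℓ':ℕ) - ((ℓ':ℕ)-1)) ⟨(ℓ':ℕ)-1, hl'm1⟩ ℓ'
        (by simp; omega) rfl (by simp; omega) (by simp; omega)
    have hBstep := hBg ⟨(ℓ':ℕ)-1, hl'm1⟩ ℓ' (by simp; omega)
    have hBl'v : (tilde m mu).2 ℓ' = (tilde m lam).2 ℓ - (n:ℚ) := by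
      have hlow := (hd1 ℓ').1
      rw [hncast]
      rw [hsubcast] at hAl'
      linarith
    have hmint : ∀ t : ℕ, 0 < t → t < n →
        ∃ j, j ≠ ℓ ∧ (tilde m lam).2 ℓ - (t:ℚ) = (tilde m lam).2 j := by
      intro t ht1 ht2
      have hjm : (ℓ:ℕ) + t < m := by have := ℓ'.isLt; omega
      refine ⟨⟨(ℓ:ℕ)+t, hjm⟩, Fin.ne_of_val_ne (by simp; omega), ?_⟩
      have := hchain t ⟨(ℓ:ℕ)+t, hjm⟩ rfl (by simp; omega)
      linarith
    right; right; right; right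
    exact master_hat_minus hsh (dom_sigma hl2) hsigsnd (by rw [hsigfst, hp]) hn0 hBl'v hBℓ'pos
      (fun j hj => Ne.symm (hBA j hj)) hmint hmu2
      (by rw [hqs, hsigfst, hp]; linarith [hBl'v])
      (image_abs_eq hApos hBpos (inj_of_gap hAg) hS ((tilde m mu).2 ℓ') rfl)
  · -- p = Al, q = -Bl, l = l'
    have hee : ℓ' = ℓ := Fin.ext hll.symm
    subst hee
    have hBoff : ∀ i, i ≠ ℓ' → (tilde m mu).2 i = (tilde m lam).2 i := by
      intro i hi
      rcases lt_or_gt_of_ne (fun hc : (i:ℕ) = (ℓ':ℕ) => hi (Fin.ext hc)) with h | h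
      · have := match_low hAg hBg hd1 hS (i:ℕ) i.isLt h h
        simpa using this
      · have := match_high hAg hBg hd1 hS (m - (i:ℕ)) (i:ℕ) i.isLt rfl h h
        simpa using this
    rcases Nat.le_one_iff_eq_zero_or_eq_one.mp (hθm ℓ') with h1 | h1 <;>
      rcases Nat.le_one_iff_eq_zero_or_eq_one.mp (hθp ℓ') with h2 | h2
    · have hBv : (tilde m mu).2 ℓ' = (tilde m lam).2 ℓ' := by
        rw [hBi ℓ', h1, h2]; push_cast; ring
      right; right; left
      apply tilde_inj
      refine Prod.ext ?_ ?_
      · rw [hqs, hBv, hsigfst, hp]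
      · rw [hsigsnd]
        funext i
        by_cases hi : i = ℓ'
        · rw [hi, hBv]
        · exact hBoff i hi
    · have hBv : (tilde m mu).2 ℓ' = (tilde m lam).2 ℓ' - ((1:ℕ):ℚ) := by
        rw [hBi ℓ', h1, h2]; push_cast; ring
      right; right; right; right
      exact master_hat_minus hsh (dom_sigma hl2) hsigsnd (by rw [hsigfst, hp]) one_pos hBv
        hBℓ'pos (fun j hj => Ne.symm (hBA j hj)) (fun t ht1 ht2 => absurd ht2 (by omega)) hmu2
        (by rw [hqs, hsigfst, hp, hBv]; push_cast; ring)
        (image_abs_eq hApos hBpos (inj_of_gap hAg) hS ((tilde m mu).2 ℓ') rfl)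
    · have hBv : (tilde m mu).2 ℓ' = (tilde m lam).2 ℓ' + ((1:ℕ):ℚ) := by
        rw [hBi ℓ', h1, h2]; push_cast; ring
      right; right; right; left
      exact master_check_minus hsc (dom_sigma hl2) hsigsnd (by rw [hsigfst, hp]) one_pos hBv
        hBℓ'pos (fun j hj => Ne.symm (hBA j hj)) (fun t ht1 ht2 => absurd ht2 (by omega)) hmu2
        (by rw [hqs, hsigfst, hp, hBv]; push_cast; ring)
        (image_abs_eq hApos hBpos (inj_of_gap hAg) hS ((tilde m mu).2 ℓ') rfl)
    · have hBv : (tilde m mu).2 ℓ' = (tilde m lam).2 ℓ' := by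
        rw [hBi ℓ', h1, h2]; push_cast; ring
      right; right; left
      apply tilde_inj
      refine Prod.ext ?_ ?_
      · rw [hqs, hBv, hsigfst, hp]
      · rw [hsigsnd]
        funext i
        by_cases hi : i = ℓ'
        · rw [hi, hBv]
        · exact hBoff i hi
  · -- p = Al, q = -Bl', l > l' : mu = lamsc
    set n : ℕ := (ℓ:ℕ) - (ℓ':ℕ) + 1 with hndef
    have hn0 : 0 < n := by omega
    have hn1q : (1:ℚ) ≤ (n:ℚ) := by exact_mod_cast hn0
    have hncast : (n:ℚ) = ((ℓ:ℕ):ℚ) - ((ℓ':ℕ):ℚ) + 1 := by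
      rw [hndef]; push_cast [Nat.cast_sub hll.le]; ring
    have hchain := chain_gt hAg hBg hd1 hS
    have hsubcast : ((((ℓ:ℕ) - (ℓ':ℕ)) : ℕ):ℚ) = ((ℓ:ℕ):ℚ) - ((ℓ':ℕ):ℚ) := by
      push_cast [Nat.cast_sub hll.le]; ring
    have hAl' : (tilde m lam).2 ℓ' = (tilde m lam).2 ℓ + ((((ℓ:ℕ) - (ℓ':ℕ)) : ℕ):ℚ) :=
      hchain ((ℓ:ℕ) - (ℓ':ℕ)) ℓ' (by omega) (by omega)
    have hl'p1 : (ℓ':ℕ) + 1 < m := by have := ℓ.isLt; omega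
    have hstep : (tilde m mu).2 ⟨(ℓ':ℕ)+1, hl'p1⟩ = (tilde m lam).2 ℓ' :=
      match_mid_gt hAg hBg hd1 hS ((ℓ':ℕ)+1) ⟨(ℓ':ℕ)+1, hl'p1⟩ ℓ'
        rfl (by simp) (by simp) (by simp; omega)
    have hBstep := hBg ℓ' ⟨(ℓ':ℕ)+1, hl'p1⟩ (by simp)
    have hBl'v : (tilde m mu).2 ℓ' = (tilde m lam).2 ℓ + (n:ℚ) := by
      have hup := (hd1 ℓ').2
      rw [hncast]
      rw [hsubcast] at hAl'
      linarith
    have hmint : ∀ t : ℕ, 0 < t → t < n →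
        ∃ j, j ≠ ℓ ∧ (tilde m lam).2 ℓ + (t:ℚ) = (tilde m lam).2 j := by
      intro t ht1 ht2
      have hjm : (ℓ:ℕ) - t < m := by have := ℓ.isLt; omega
      refine ⟨⟨(ℓ:ℕ)-t, hjm⟩, Fin.ne_of_val_ne (by simp; omega), ?_⟩
      have := hchain t ⟨(ℓ:ℕ)-t, hjm⟩ (by simp; omega) (by simp; omega)
      linarith
    right; right; right; left
    exact master_check_minus hsc (dom_sigma hl2) hsigsnd (by rw [hsigfst, hp]) hn0 hBl'v
      hBℓ'pos (fun j hj => Ne.symm (hBA j hj)) hmint hmu2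
      (by rw [hqs, hsigfst, hp]; linarith [hBl'v])
      (image_abs_eq hApos hBpos (inj_of_gap hAg) hS ((tilde m mu).2 ℓ') rfl)
  · -- p = -Al, q = Bl', l < l' : contradiction
    exfalso
    linarith [hq, hp, hqs, hTnn, hApos ℓ, hBpos ℓ']
  · -- p = -Al, q = Bl', l = l' : contradiction
    exfalso
    linarith [hq, hp, hqs, hTnn, hApos ℓ, hBpos ℓ']
  · -- p = -Al, q = Bl', l > l' : contradiction
    exfalso
    linarith [hq, hp, hqs, hTnn, hApos ℓ, hBpos ℓ']
  · -- p = -Al, q = -Bl', l < l' : contradiction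
    exfalso
    set n : ℕ := (ℓ':ℕ) - (ℓ:ℕ) + 1 with hndef
    have hn0 : 0 < n := by omega
    have hn1q : (1:ℚ) ≤ (n:ℚ) := by exact_mod_cast hn0
    have hncast : (n:ℚ) = ((ℓ':ℕ):ℚ) - ((ℓ:ℕ):ℚ) + 1 := by
      rw [hndef]; push_cast [Nat.cast_sub hll.le]; ring
    have hchain := chain_lt hAg hBg hd1 hS
    have hsubcast : ((((ℓ':ℕ) - (ℓ:ℕ)) : ℕ):ℚ) = ((ℓ':ℕ):ℚ) - ((ℓ:ℕ):ℚ) := by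
      push_cast [Nat.cast_sub hll.le]; ring
    have hAl' : (tilde m lam).2 ℓ' = (tilde m lam).2 ℓ - ((((ℓ':ℕ) - (ℓ:ℕ)) : ℕ):ℚ) :=
      hchain ((ℓ':ℕ) - (ℓ:ℕ)) ℓ' (by omega) (by omega)
    have hl'm1 : (ℓ':ℕ) - 1 < m := by have := ℓ'.isLt; omega
    have hstep : (tilde m mu).2 ⟨(ℓ':ℕ)-1, hl'm1⟩ = (tilde m lam).2 ℓ' :=
      match_mid_lt hAg hBg hd1 hS ((ℓ':ℕ) - ((ℓ':ℕ)-1)) ⟨(ℓ':ℕ)-1, hl'm1⟩ ℓ'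
        (by simp; omega) rfl (by simp; omega) (by simp; omega)
    have hBstep := hBg ⟨(ℓ':ℕ)-1, hl'm1⟩ ℓ' (by simp; omega)
    have hBl'v : (tilde m mu).2 ℓ' = (tilde m lam).2 ℓ - (n:ℚ) := by
      have hlow := (hd1 ℓ').1
      rw [hncast]
      rw [hsubcast] at hAl'
      linarith
    have hmint : ∀ t : ℕ, 0 < t → t < n →
        ∃ j, j ≠ ℓ ∧ (tilde m lam).2 ℓ - (t:ℚ) = (tilde m lam).2 j := by
      intro t ht1 ht2
      have hjm : (ℓ:ℕ) + t < m := by have := ℓ'.isLt; omega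
      refine ⟨⟨(ℓ:ℕ)+t, hjm⟩, Fin.ne_of_val_ne (by simp; omega), ?_⟩
      have := hchain t ⟨(ℓ:ℕ)+t, hjm⟩ rfl (by simp; omega)
      linarith
    linarith [hq, hp, hqs, hBl'v, hTnn, hn1q]
  · -- p = -Al, q = -Bl, l = l'
    have hee : ℓ' = ℓ := Fin.ext hll.symm
    subst hee
    have hBoff : ∀ i, i ≠ ℓ' → (tilde m mu).2 i = (tilde m lam).2 i := by
      intro i hi
      rcases lt_or_gt_of_ne (fun hc : (i:ℕ) = (ℓ':ℕ) => hi (Fin.ext hc)) with h | h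
      · have := match_low hAg hBg hd1 hS (i:ℕ) i.isLt h h
        simpa using this
      · have := match_high hAg hBg hd1 hS (m - (i:ℕ)) (i:ℕ) i.isLt rfl h h
        simpa using this
    rcases Nat.le_one_iff_eq_zero_or_eq_one.mp (hθm ℓ') with h1 | h1 <;>
      rcases Nat.le_one_iff_eq_zero_or_eq_one.mp (hθp ℓ') with h2 | h2
    · have hBv : (tilde m mu).2 ℓ' = (tilde m lam).2 ℓ' := by
        rw [hBi ℓ', h1, h2]; push_cast; ring
      left
      apply tilde_inj
      refine Prod.ext ?_ ?_
      · rw [hqs, hBv, hp]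
      · funext i
        by_cases hi : i = ℓ'
        · rw [hi, hBv]
        · exact hBoff i hi
    · exfalso
      have hBv : (tilde m mu).2 ℓ' = (tilde m lam).2 ℓ' - 1 := by
        rw [hBi ℓ', h1, h2]; push_cast; ring
      linarith [hq, hp, hqs, hBv, hTnn]
    · have hBv : (tilde m mu).2 ℓ' = (tilde m lam).2 ℓ' + ((1:ℕ):ℚ) := by
        rw [hBi ℓ', h1, h2]; push_cast; ring
      right; left
      exact master_check_minus hc hl2 rfl hp one_pos hBv hBℓ'pos
        (fun j hj => Ne.symm (hBA j hj)) (fun t ht1 ht2 => absurd ht2 (by omega)) hmu2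
        (by rw [hqs, hp, hBv]; push_cast; ring)
        (image_abs_eq hApos hBpos (inj_of_gap hAg) hS ((tilde m mu).2 ℓ') rfl)
    · have hBv : (tilde m mu).2 ℓ' = (tilde m lam).2 ℓ' := by
        rw [hBi ℓ', h1, h2]; push_cast; ring
      left
      apply tilde_inj
      refine Prod.ext ?_ ?_
      · rw [hqs, hBv, hp]
      · funext i
        by_cases hi : i = ℓ'
        · rw [hi, hBv]
        · exact hBoff i hi
  · -- p = -Al, q = -Bl', l > l' : mu = lamc
    set n : ℕ := (ℓ:ℕ) - (ℓ':ℕ) + 1 with hndef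
    have hn0 : 0 < n := by omega
    have hn1q : (1:ℚ) ≤ (n:ℚ) := by exact_mod_cast hn0
    have hncast : (n:ℚ) = ((ℓ:ℕ):ℚ) - ((ℓ':ℕ):ℚ) + 1 := by
      rw [hndef]; push_cast [Nat.cast_sub hll.le]; ring
    have hchain := chain_gt hAg hBg hd1 hS
    have hsubcast : ((((ℓ:ℕ) - (ℓ':ℕ)) : ℕ):ℚ) = ((ℓ:ℕ):ℚ) - ((ℓ':ℕ):ℚ) := by
      push_cast [Nat.cast_sub hll.le]; ring
    have hAl' : (tilde m lam).2 ℓ' = (tilde m lam).2 ℓ + ((((ℓ:ℕ) - (ℓ':ℕ)) : ℕ):ℚ) :=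
      hchain ((ℓ:ℕ) - (ℓ':ℕ)) ℓ' (by omega) (by omega)
    have hl'p1 : (ℓ':ℕ) + 1 < m := by have := ℓ.isLt; omega
    have hstep : (tilde m mu).2 ⟨(ℓ':ℕ)+1, hl'p1⟩ = (tilde m lam).2 ℓ' :=
      match_mid_gt hAg hBg hd1 hS ((ℓ':ℕ)+1) ⟨(ℓ':ℕ)+1, hl'p1⟩ ℓ'
        rfl (by simp) (by simp) (by simp; omega)
    have hBstep := hBg ℓ' ⟨(ℓ':ℕ)+1, hl'p1⟩ (by simp)
    have hBl'v : (tilde m mu).2 ℓ' = (tilde m lam).2 ℓ + (n:ℚ) := by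
      have hup := (hd1 ℓ').2
      rw [hncast]
      rw [hsubcast] at hAl'
      linarith
    have hmint : ∀ t : ℕ, 0 < t → t < n →
        ∃ j, j ≠ ℓ ∧ (tilde m lam).2 ℓ + (t:ℚ) = (tilde m lam).2 j := by
      intro t ht1 ht2
      have hjm : (ℓ:ℕ) - t < m := by have := ℓ.isLt; omega
      refine ⟨⟨(ℓ:ℕ)-t, hjm⟩, Fin.ne_of_val_ne (by simp; omega), ?_⟩
      have := hchain t ⟨(ℓ:ℕ)-t, hjm⟩ (by simp; omega) (by simp; omega)
      linarith
    right; left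
    exact master_check_minus hc hl2 rfl hp hn0 hBl'v hBℓ'pos
      (fun j hj => Ne.symm (hBA j hj)) hmint hmu2
      (by rw [hqs, hp]; linarith [hBl'v])
      (image_abs_eq hApos hBpos (inj_of_gap hAg) hS ((tilde m mu).2 ℓ') rfl)

end
end

section
/- The set of integral g-dominant atypical weights whose atypicality type equals the atypicality type of the zero weight (namely the set {m−1−s, m−2−s, ..., 1−s}) is exactly {Λ^{(i)} : i ∈ ℤ≥0}, where Λ^{(0)} = (0 | 0, ..., 0) and Λ^{(i)} = (2m + i − 1 − 2s | i−1, 0, ..., 0) for i ≥ 1. (This is the classification (6.2) of the weights Λ^{(i)} with the same central character as the trivial module, used in the computation of the cohomology groups.) -/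
/-!
The classification (6.2) of Su–Zhang: the integral `g`-dominant atypical
weights whose atypicality type equals that of the zero weight (namely
`{m−1−s, …, 1−s}`) are exactly the weights `Λ⁽⁰⁾ = (0 | 0, …, 0)` and
`Λ⁽ⁱ⁾ = (2m+i−1−2s | i−1, 0, …, 0)` for `i ≥ 1`.  Here `k = 2m+1`, `m ≥ 1`,
`s = 1/2` when `par = true`, and `k = 2m`, `m ≥ 2`, `s = 1` when
`par = false`.  A weight `(λ₀ | λ₁, …, λ_m)` is encoded as
`ℚ × (Fin m → ℚ)`, the index `i : Fin m` standing for `λ_{i+1}`.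
-/

open Finset

noncomputable section

/-- `s = 1/2` for `k = 2m+1` (`par = true`), `s = 1` for `k = 2m`. -/
def sval (par : Bool) : ℚ := if par then 1 / 2 else 1

/-- The ρ-translated weight `λ̃ = λ + ρ`,
`ρ = (s−m | m−s, m−1−s, …, 1−s)`. -/
def tildeP (m : ℕ) (par : Bool) (lam : Wt m) : Wt m :=
  (lam.1 + sval par - m,
    fun i => lam.2 i + (m : ℚ) + 1 - sval par - (((i : ℕ) : ℚ) + 1))

/-- `λ` is integral: `λ₀ ∈ ℤ` and `λ₁, …, λ_m` all in `ℤ` or all in `s + ℤ`. -/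
def IntegralP (m : ℕ) (par : Bool) (lam : Wt m) : Prop :=
  (∃ n : ℤ, lam.1 = (n : ℚ)) ∧
    ((∀ i, ∃ n : ℤ, lam.2 i = (n : ℚ)) ∨
      ∀ i, ∃ n : ℤ, lam.2 i = (n : ℚ) + sval par)

/-- `λ` is `g₀`-dominant: `λ₁ ≥ … ≥ λ_{m−1} ≥ |λ_m|`, with additionally
`λ_m ≥ 0` when `k = 2m+1`. -/
def G0DomP (m : ℕ) (par : Bool) (lam : Wt m) : Prop :=
  (∀ i j : Fin m, i < j →
      (if (j : ℕ) = m - 1 then |lam.2 j| else lam.2 j) ≤ lam.2 i) ∧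
    (par = true → ∀ j : Fin m, (j : ℕ) = m - 1 → 0 ≤ lam.2 j)

/-- `λ` is atypical: `|λ̃₀| = |λ̃_ℓ|` for some `ℓ`. -/
def AtypicalP (m : ℕ) (par : Bool) (lam : Wt m) : Prop :=
  ∃ l : Fin m, |(tildeP m par lam).1| = |(tildeP m par lam).2 l|

/-- The atypicality type `S(λ̄) = {|λ̃_i| : i ≠ ℓ}` of an atypical
`g₀`-dominant weight (where `|λ̃_ℓ| = |λ̃₀|`). -/
def atypTypeP (m : ℕ) (par : Bool) (lam : Wt m) : Finset ℚ :=
  (Finset.univ.image fun i => |(tildeP m par lam).2 i|).erase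
    |(tildeP m par lam).1|

/-- `λ` is `g`-dominant: it is integral, `g₀`-dominant, `λ₀ ∈ ℤ≥0`, and
`λ_j = 0` whenever `j > λ₀`. -/
def GDomP (m : ℕ) (par : Bool) (lam : Wt m) : Prop :=
  IntegralP m par lam ∧ G0DomP m par lam ∧ 0 ≤ lam.1 ∧
    ∀ i : Fin m, lam.1 < ((i : ℕ) : ℚ) + 1 → lam.2 i = 0

/-- The atypicality type of the zero weight: `{m−1−s, m−2−s, …, 1−s}`. -/
def S0 (m : ℕ) (par : Bool) : Finset ℚ :=
  Finset.univ.image fun i : Fin (m - 1) => ((i : ℕ) : ℚ) + 1 - sval par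

/-- `Λ⁽⁰⁾ = (0 | 0, …, 0)` and `Λ⁽ⁱ⁾ = (2m+i−1−2s | i−1, 0, …, 0)` for
`i ≥ 1`. -/
def LambdaW (m : ℕ) (par : Bool) (i : ℕ) : Wt m :=
  if i = 0 then 0
  else (2 * (m : ℚ) + (i : ℚ) - 1 - 2 * sval par,
    fun j => if (j : ℕ) = 0 then (i : ℚ) - 1 else 0)

lemma sval_pos (par : Bool) : 0 < sval par := by cases par <;> norm_num [sval]

lemma sval_le_one (par : Bool) : sval par ≤ 1 := by cases par <;> norm_num [sval]

lemma aux_mem (m : ℕ) (s x : ℚ) :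
    (∃ j : ℕ, 1 ≤ j ∧ j < m ∧ x = (m : ℚ) - s - j) ↔
      (∃ c : ℕ, c < m - 1 ∧ x = (c : ℚ) + 1 - s) := by
  constructor
  · rintro ⟨j, h1, h2, rfl⟩
    refine ⟨m - 1 - j, by omega, ?_⟩
    rw [Nat.cast_sub (by omega), Nat.cast_sub (by omega)]
    push_cast
    ring
  · rintro ⟨c, hc, rfl⟩
    refine ⟨m - 1 - c, by omega, by omega, ?_⟩
    rw [Nat.cast_sub (by omega), Nat.cast_sub (by omega)]
    push_cast
    ring

lemma mem_S0_iff (m : ℕ) (par : Bool) (x : ℚ) :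
    x ∈ S0 m par ↔ ∃ c : ℕ, c < m - 1 ∧ x = (c : ℚ) + 1 - sval par := by
  simp only [S0, Finset.mem_image, Finset.mem_univ, true_and]
  constructor
  · rintro ⟨c, rfl⟩; exact ⟨c, c.isLt, rfl⟩
  · rintro ⟨c, hc, rfl⟩; exact ⟨⟨c, hc⟩, rfl⟩

lemma mem_atypType_iff (m : ℕ) (par : Bool) (lam : Wt m) (x : ℚ) :
    x ∈ atypTypeP m par lam ↔
      x ≠ |(tildeP m par lam).1| ∧ ∃ j : Fin m, |(tildeP m par lam).2 j| = x := by
  simp [atypTypeP, Finset.mem_erase, Finset.mem_image]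

/-- the set of integral `g`-dominant atypical weights with
atypicality type `{m−1−s, …, 1−s}` (the atypicality type of the zero weight)
is exactly `{Λ⁽ⁱ⁾ : i ∈ ℤ≥0}`. -/
theorem trivial_central_character_weights (m : ℕ) (par : Bool)
    (hm : if par then 1 ≤ m else 2 ≤ m) :
    {lam : Wt m | GDomP m par lam ∧ AtypicalP m par lam ∧
        atypTypeP m par lam = S0 m par} =
      Set.range (LambdaW m par) := by
  have hm1 : 1 ≤ m := by cases par <;> simp_all <;> omega
  have hs_pos : 0 < sval par := sval_pos par
  have hs_le : sval par ≤ 1 := sval_le_one par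
  have hmQ : (1:ℚ) ≤ (m:ℚ) := by exact_mod_cast hm1
  have hms : 2 * sval par ≤ 2*(m:ℚ) - 1 := by
    cases par
    · have h2 : (2:ℚ) ≤ (m:ℚ) := by exact_mod_cast (by simpa using hm : 2 ≤ m)
      simp only [sval]; norm_num; linarith
    · simp only [sval]; norm_num; linarith
  have h2s : ∃ z : ℤ, 2 * sval par = (z:ℚ) := by
    cases par
    · exact ⟨2, by norm_num [sval]⟩
    · exact ⟨1, by norm_num [sval]⟩
  ext lam
  obtain ⟨l1, l2⟩ := lam
  simp only [Set.mem_setOf_eq, Set.mem_range]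
  constructor
  · rintro ⟨⟨⟨⟨n0, hn0⟩, -⟩, ⟨hdom, hpar⟩, hlam0, -⟩, ⟨l, hl⟩, hS⟩
    dsimp only at hn0 hdom hpar hlam0
    -- the shifted entries
    have Ej : ∀ j : Fin m, (tildeP m par (l1, l2)).2 j
        = l2 j + ((m:ℚ) - sval par - ((j:ℕ):ℚ)) := by
      intro j; simp only [tildeP]; ring
    set t : Fin m → ℚ := fun j => |l2 j + ((m:ℚ) - sval par - ((j:ℕ):ℚ))| with ht
    have tdef : ∀ j : Fin m, |(tildeP m par (l1, l2)).2 j| = t j := by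
      intro j; rw [Ej]
    -- nonnegativity of entries other than the last
    have fnn : ∀ j : Fin m, (j:ℕ) + 1 < m → 0 ≤ l2 j := by
      intro j hj
      have h := hdom j ⟨m - 1, by omega⟩ (by simp [Fin.lt_def]; omega)
      rw [if_pos rfl] at h
      exact (abs_nonneg _).trans h
    -- consecutive spacing
    have spac : ∀ n : ℕ, ∀ h : n + 1 < m,
        t ⟨n+1, h⟩ + 1 ≤ t ⟨n, Nat.lt_of_succ_lt h⟩ := by
      intro n h
      have hfn : 0 ≤ l2 ⟨n, Nat.lt_of_succ_lt h⟩ := fnn _ (by simpa using h)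
      have hnm : ((n:ℚ)) + 1 < (m:ℚ) := by exact_mod_cast h
      have e0 : t ⟨n, Nat.lt_of_succ_lt h⟩
          = l2 ⟨n, Nat.lt_of_succ_lt h⟩ + ((m:ℚ) - sval par - ((n:ℕ):ℚ)) :=
        abs_of_nonneg (by push_cast; linarith)
      by_cases hc : n + 2 < m
      · have hfn1 : 0 ≤ l2 ⟨n+1, h⟩ := fnn _ (by simpa using hc)
        have hcQ : ((n:ℚ)) + 2 < (m:ℚ) := by exact_mod_cast hc
        have hmono : l2 ⟨n+1, h⟩ ≤ l2 ⟨n, Nat.lt_of_succ_lt h⟩ := by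
          have h' := hdom ⟨n, Nat.lt_of_succ_lt h⟩ ⟨n+1, h⟩ (by simp [Fin.lt_def])
          rwa [if_neg (by simp; omega)] at h'
        have e1 : t ⟨n+1, h⟩ = l2 ⟨n+1, h⟩ + ((m:ℚ) - sval par - (((n+1:ℕ)):ℚ)) :=
          abs_of_nonneg (by push_cast; linarith)
        rw [e0, e1]; push_cast; linarith
      · -- n+1 is the last index
        have hm2 : n + 2 = m := by omega
        have hmQ2 : (m:ℚ) = (n:ℚ) + 2 := by exact_mod_cast hm2.symm
        have habs : |l2 ⟨n+1, h⟩| ≤ l2 ⟨n, Nat.lt_of_succ_lt h⟩ := by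
          have h' := hdom ⟨n, Nat.lt_of_succ_lt h⟩ ⟨n+1, h⟩ (by simp [Fin.lt_def])
          rwa [if_pos (by simp; omega)] at h'
        obtain ⟨hA, hB⟩ := abs_le.mp habs
        have e1 : t ⟨n+1, h⟩ ≤ l2 ⟨n, Nat.lt_of_succ_lt h⟩ + 1 - sval par := by
          show |l2 ⟨n+1, h⟩ + ((m:ℚ) - sval par - (((n+1:ℕ)):ℚ))| ≤ _
          rw [abs_le]; constructor <;> push_cast <;> rw [hmQ2] <;>
            [linarith; linarith]
        rw [e0]; push_cast; linarith
    -- extension of t to ℕ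
    have hmin : ∀ n : ℕ, min n (m-1) < m := fun n => by omega
    set tt : ℕ → ℚ := fun n => t ⟨min n (m-1), hmin n⟩ with htt
    have htt' : ∀ n : ℕ, ∀ h : n < m, tt n = t ⟨n, h⟩ := by
      intro n h
      have : min n (m-1) = n := by omega
      simp only [htt]
      congr 1
      exact Fin.ext this
    have spac' : ∀ n : ℕ, n + 1 < m → tt (n+1) + 1 ≤ tt n := by
      intro n h
      rw [htt' _ h, htt' _ (Nat.lt_of_succ_lt h)]
      exact spac n h
    -- the chain inequality
    have key : ∀ a b : ℕ, a ≤ b → b < m → tt b + ((b - a : ℕ):ℚ) ≤ tt a := by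
      intro a b hab
      induction b, hab using Nat.le_induction with
      | base => intro h; simp
      | succ b hab ih =>
        intro h
        have ihb := ih (by omega)
        have sp := spac' b h
        have hca : ((b + 1 - a : ℕ):ℚ) = ((b - a : ℕ):ℚ) + 1 := by
          rw [Nat.cast_sub (by omega), Nat.cast_sub (by omega)]; push_cast; ring
        rw [hca]; linarith
    have tstrict : ∀ a b : ℕ, a < b → ∀ hb : b < m, tt b < tt a := by
      intro a b hab hb
      have := key a b (le_of_lt hab) hb
      have h1 : (1:ℚ) ≤ ((b - a : ℕ):ℚ) := by exact_mod_cast Nat.one_le_iff_ne_zero.mpr (by omega)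
      linarith
    -- membership of the non-atypical entries in S0
    have hmemS : ∀ j : Fin m, j ≠ l → t j ∈ S0 m par := by
      intro j hj
      rw [← hS, mem_atypType_iff]
      refine ⟨?_, j, tdef j⟩
      rw [hl, tdef l]
      rcases Nat.lt_or_ge (j:ℕ) (l:ℕ) with hlt | hge
      · have := tstrict (j:ℕ) (l:ℕ) hlt l.isLt
        rw [htt' _ l.isLt, htt' _ j.isLt] at this
        simp only [Fin.eta] at this
        exact (ne_of_gt this)
      · have hlt : (l:ℕ) < (j:ℕ) := by
          rcases Nat.lt_or_ge (l:ℕ) (j:ℕ) with h' | h'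
          · exact h'
          · exact absurd (Fin.ext (by omega : (j:ℕ) = (l:ℕ))) hj
        have := tstrict (l:ℕ) (j:ℕ) hlt j.isLt
        rw [htt' _ l.isLt, htt' _ j.isLt] at this
        simp only [Fin.eta] at this
        exact (ne_of_lt this)
    -- the atypical index is the first one
    have hl0 : (l:ℕ) = 0 := by
      by_contra h0
      have h2m : 2 ≤ m := by have := l.isLt; omega
      have hj0 : (⟨0, by omega⟩ : Fin m) ≠ l := by
        intro hh; exact h0 (by rw [← hh])
      have hmem := hmemS ⟨0, by omega⟩ hj0
      rw [mem_S0_iff] at hmem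
      obtain ⟨c, hc, he⟩ := hmem
      have hcQ : (c:ℚ) ≤ (m:ℚ) - 2 := by
        have : c + 2 ≤ m := by omega
        have := (Nat.cast_le (α := ℚ)).mpr this
        push_cast at this; linarith
      have f0 : 0 ≤ l2 ⟨0, by omega⟩ := fnn _ (by simp; omega)
      have hge : l2 ⟨0, by omega⟩ + ((m:ℚ) - sval par - ((0:ℕ):ℚ)) ≤ t ⟨0, by omega⟩ :=
        le_abs_self _
      rw [he] at hge
      push_cast at hge
      linarith
    -- values of t at positive indices
    have hval : ∀ n : ℕ, 1 ≤ n → ∀ h : n < m, t ⟨n, h⟩ = (m:ℚ) - sval par - (n:ℚ) := by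
      intro n h1 h
      have h2m : 2 ≤ m := by omega
      have hne : ∀ j : Fin m, (j:ℕ) ≠ 0 → j ≠ l := by
        intro j hj hh; rw [hh] at hj; exact hj hl0
      -- upper bound from t 1
      have hub : t ⟨1, by omega⟩ ≤ (m:ℚ) - 1 - sval par := by
        obtain ⟨c, hc, he⟩ := (mem_S0_iff _ _ _).mp (hmemS ⟨1, by omega⟩ (hne _ (by simp)))
        have hcQ : (c:ℚ) ≤ (m:ℚ) - 2 := by
          have : c + 2 ≤ m := by omega
          have := (Nat.cast_le (α := ℚ)).mpr this
          push_cast at this; linarith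
        rw [he]; linarith
      have hlb : (1:ℚ) - sval par ≤ t ⟨m - 1, by omega⟩ := by
        obtain ⟨c, hc, he⟩ := (mem_S0_iff _ _ _).mp
          (hmemS ⟨m - 1, by omega⟩ (hne _ (by simp; omega)))
        have : (0:ℚ) ≤ (c:ℚ) := by positivity
        rw [he]; linarith
      have k1 := key 1 n h1 h
      have k2 := key n (m-1) (by omega) (by omega)
      rw [htt' _ h, htt' _ (by omega : 1 < m)] at k1
      rw [htt' _ (by omega : m - 1 < m), htt' _ h] at k2
      have hc1 : ((n - 1 : ℕ):ℚ) = (n:ℚ) - 1 := by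
        rw [Nat.cast_sub (by omega)]; push_cast; ring
      have hc2 : ((m - 1 - n : ℕ):ℚ) = (m:ℚ) - 1 - (n:ℚ) := by
        rw [Nat.cast_sub (by omega), Nat.cast_sub (by omega)]; push_cast; ring
      rw [hc1] at k1
      rw [hc2] at k2
      have := hub
      have := hlb
      linarith
    -- tail components vanish
    have hfz : ∀ j : Fin m, 1 ≤ (j:ℕ) → l2 j = 0 := by
      intro j hj
      have hv := hval (j:ℕ) hj j.isLt
      simp only [Fin.eta] at hv
      by_cases hc : (j:ℕ) + 1 < m
      · have hfj : 0 ≤ l2 j := fnn j hc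
        have hjQ : ((j:ℕ):ℚ) + 2 ≤ (m:ℚ) := by exact_mod_cast hc
        have e : t j = l2 j + ((m:ℚ) - sval par - ((j:ℕ):ℚ)) :=
          abs_of_nonneg (by linarith)
        rw [e] at hv; linarith
      · have hjm : (j:ℕ) = m - 1 := by have := j.isLt; omega
        have hjQ : ((j:ℕ):ℚ) = (m:ℚ) - 1 := by
          have h' : (j:ℕ) + 1 = m := by have := j.isLt; omega
          have h'' := congrArg (fun n : ℕ => (n:ℚ)) h'
          push_cast at h''; linarith
        have e2 : l2 j + ((m:ℚ) - sval par - ((j:ℕ):ℚ)) = l2 j + (1 - sval par) := by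
          rw [hjQ]; ring
        have hv' : |l2 j + (1 - sval par)| = 1 - sval par := by
          have e3 : t j = |l2 j + (1 - sval par)| := by
            simp only [ht]; rw [e2]
          rw [e3] at hv; rw [hv, hjQ]; ring
        cases hp : par
        · -- par = false : sval = 1
          have hsv : sval false = 1 := by norm_num [sval]
          rw [hp] at hv'
          rw [hsv] at hv'
          simpa using hv'
        · -- par = true : l2 j ≥ 0
          have hfj : 0 ≤ l2 j := hpar hp j hjm
          have hnn : 0 ≤ l2 j + (1 - sval par) := by linarith
          rw [abs_of_nonneg hnn] at hv'
          linarith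
    -- the first component of l2 is nonnegative
    have f0nn : 0 ≤ l2 ⟨0, by omega⟩ := by
      by_cases hc : 0 + 1 < m
      · exact fnn _ hc
      · have hm1' : m = 1 := by omega
        cases hp : par
        · exfalso; rw [hp] at hm; simp at hm; omega
        · exact hpar hp _ (by omega)
    -- the atypicality equation
    have habs0 : |l1 + sval par - (m:ℚ)| = l2 ⟨0, by omega⟩ + ((m:ℚ) - sval par) := by
      have hlf : l = ⟨0, by omega⟩ := Fin.ext hl0
      rw [hlf] at hl
      rw [tdef] at hl
      have e : t ⟨0, by omega⟩ = l2 ⟨0, by omega⟩ + ((m:ℚ) - sval par) := by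
        have : t ⟨0, by omega⟩ = |l2 ⟨0, by omega⟩ + ((m:ℚ) - sval par - ((0:ℕ):ℚ))| := rfl
        rw [this, abs_of_nonneg (by push_cast; linarith)]
        push_cast; ring
      rw [e] at hl
      exact hl
    obtain ⟨z, hz⟩ := h2s
    rcases (abs_eq (by linarith)).mp habs0 with hcase | hcase
    · -- l1 = l2 0 + 2m - 2s
      have hk : l2 ⟨0, by omega⟩ = ((n0 - 2*(m:ℤ) + z : ℤ) : ℚ) := by
        push_cast; rw [← hn0]; linarith
      have hk0 : (0:ℤ) ≤ n0 - 2*(m:ℤ) + z := by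
        have h' := f0nn; rw [hk] at h'; exact_mod_cast h'
      obtain ⟨kn, hkn⟩ := Int.eq_ofNat_of_zero_le hk0
      have hkQ2 : l2 ⟨0, by omega⟩ = (kn:ℚ) := by
        rw [hk, hkn]; push_cast; ring
      refine ⟨kn + 1, ?_⟩
      rw [LambdaW, if_neg (by omega)]
      refine Prod.ext ?_ ?_
      · show 2*(m:ℚ) + ((kn + 1 : ℕ):ℚ) - 1 - 2 * sval par = l1
        push_cast
        rw [← hkQ2]
        linarith
      · funext j
        show (if (j:ℕ) = 0 then ((kn + 1 : ℕ):ℚ) - 1 else 0) = l2 j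
        by_cases hj : (j:ℕ) = 0
        · rw [if_pos hj, show j = ⟨0, by omega⟩ from Fin.ext hj, hkQ2]
          push_cast; ring
        · rw [if_neg hj]
          exact (hfz j (by omega)).symm
    · -- l1 = -l2 0, hence both vanish
      have h10 : l1 = 0 := by linarith
      have h20 : l2 ⟨0, by omega⟩ = 0 := by linarith
      refine ⟨0, ?_⟩
      rw [LambdaW, if_pos rfl]
      refine Prod.ext ?_ ?_
      · exact h10.symm
      · funext j
        show (0:ℚ) = l2 j
        by_cases hj : (j:ℕ) = 0
        · rw [show j = ⟨0, by omega⟩ from Fin.ext hj]; exact h20.symm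
        · exact (hfz j (by omega)).symm
  · rintro ⟨i, hi⟩
    rw [← hi]
    rcases Nat.eq_zero_or_pos i with hi0 | hi1
    · -- Λ⁽⁰⁾ = 0
      subst hi0
      have h0 : LambdaW m par 0 = ((0:ℚ), fun _ : Fin m => (0:ℚ)) := by
        rw [LambdaW, if_pos rfl]; rfl
      rw [h0]
      have hT1 : |(tildeP m par ((0:ℚ), fun _ : Fin m => (0:ℚ))).1|
          = (m:ℚ) - sval par := by
        show |0 + sval par - (m:ℚ)| = _
        rw [abs_of_nonpos (by linarith)]; ring
      have hT2 : ∀ j : Fin m, |(tildeP m par ((0:ℚ), fun _ : Fin m => (0:ℚ))).2 j|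
          = (m:ℚ) - sval par - ((j:ℕ):ℚ) := by
        intro j
        have hjQ : ((j:ℕ):ℚ) + 1 ≤ (m:ℚ) := by exact_mod_cast j.isLt
        show |0 + (m:ℚ) + 1 - sval par - (((j:ℕ):ℚ) + 1)| = _
        rw [abs_of_nonneg (by linarith)]; ring
      refine ⟨⟨⟨⟨0, by norm_num⟩, Or.inl fun j => ⟨0, by norm_num⟩⟩,
        ⟨fun a b hab => by simp, fun _ j _ => le_refl 0⟩,
        le_refl 0, fun j _ => rfl⟩, ⟨⟨0, by omega⟩, ?_⟩, ?_⟩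
      · rw [hT1, hT2]
        norm_num
      · ext x
        rw [mem_atypType_iff, mem_S0_iff, ← aux_mem m (sval par) x]
        constructor
        · rintro ⟨hne, j, hj⟩
          rw [hT2 j] at hj
          have hj0 : (j:ℕ) ≠ 0 := by
            intro h0'
            apply hne
            rw [hT1, ← hj, h0']
            norm_num
          exact ⟨(j:ℕ), by omega, j.isLt, hj.symm⟩
        · rintro ⟨j, hj1, hj2, hjx⟩
          have hjQ : (1:ℚ) ≤ ((j:ℕ):ℚ) := by exact_mod_cast hj1
          refine ⟨?_, ⟨⟨j, hj2⟩, ?_⟩⟩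
          · rw [hT1, hjx]
            intro heq; linarith
          · rw [hT2 ⟨j, hj2⟩]
            exact hjx.symm
    · -- Λ⁽ⁱ⁾, i ≥ 1
      have hiQ : (1:ℚ) ≤ (i:ℚ) := by exact_mod_cast hi1
      obtain ⟨z, hz⟩ := h2s
      rw [LambdaW, if_neg (by omega)]
      have hT1 : |(tildeP m par (2*(m:ℚ) + (i:ℚ) - 1 - 2*sval par,
            fun j : Fin m => if (j:ℕ) = 0 then (i:ℚ) - 1 else 0)).1|
          = (m:ℚ) + (i:ℚ) - 1 - sval par := by
        show |2*(m:ℚ) + (i:ℚ) - 1 - 2*sval par + sval par - (m:ℚ)| = _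
        rw [abs_of_nonneg (by linarith)]; ring
      have hT20 : ∀ j : Fin m, (j:ℕ) = 0 →
          |(tildeP m par (2*(m:ℚ) + (i:ℚ) - 1 - 2*sval par,
            fun j : Fin m => if (j:ℕ) = 0 then (i:ℚ) - 1 else 0)).2 j|
          = (m:ℚ) + (i:ℚ) - 1 - sval par := by
        intro j hj
        show |(if (j:ℕ) = 0 then (i:ℚ) - 1 else 0) + (m:ℚ) + 1 - sval par
          - (((j:ℕ):ℚ) + 1)| = _
        rw [if_pos hj, hj]
        push_cast
        rw [abs_of_nonneg (by linarith)]; ring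
      have hT2 : ∀ j : Fin m, (j:ℕ) ≠ 0 →
          |(tildeP m par (2*(m:ℚ) + (i:ℚ) - 1 - 2*sval par,
            fun j : Fin m => if (j:ℕ) = 0 then (i:ℚ) - 1 else 0)).2 j|
          = (m:ℚ) - sval par - ((j:ℕ):ℚ) := by
        intro j hj
        have hjQ : ((j:ℕ):ℚ) + 1 ≤ (m:ℚ) := by exact_mod_cast j.isLt
        show |(if (j:ℕ) = 0 then (i:ℚ) - 1 else 0) + (m:ℚ) + 1 - sval par
          - (((j:ℕ):ℚ) + 1)| = _
        rw [if_neg hj]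
        rw [abs_of_nonneg (by linarith)]; ring
      refine ⟨⟨⟨⟨2*(m:ℤ) + (i:ℤ) - 1 - z, ?_⟩, Or.inl fun j => ?_⟩,
        ⟨fun a b hab => ?_, fun _ j _ => ?_⟩, ?_, fun j hj => ?_⟩,
        ⟨⟨0, by omega⟩, ?_⟩, ?_⟩
      · show 2*(m:ℚ) + (i:ℚ) - 1 - 2*sval par = _
        push_cast
        linarith
      · dsimp only
        by_cases hj : (j:ℕ) = 0
        · exact ⟨(i:ℤ) - 1, by rw [if_pos hj]; push_cast; ring⟩
        · exact ⟨0, by rw [if_neg hj]; norm_num⟩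
      · have hb0 : (b:ℕ) ≠ 0 := by
          rw [Fin.lt_def] at hab; omega
        show (if (b:ℕ) = m - 1 then |if (b:ℕ) = 0 then (i:ℚ) - 1 else 0|
          else if (b:ℕ) = 0 then (i:ℚ) - 1 else 0)
          ≤ (if (a:ℕ) = 0 then (i:ℚ) - 1 else 0)
        have hva : (0:ℚ) ≤ (if (a:ℕ) = 0 then (i:ℚ) - 1 else 0) := by
          by_cases ha : (a:ℕ) = 0
          · rw [if_pos ha]; linarith
          · rw [if_neg ha]
        rw [if_neg hb0]
        split <;> simpa using hva
      · show (0:ℚ) ≤ (if (j:ℕ) = 0 then (i:ℚ) - 1 else 0)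
        by_cases hj : (j:ℕ) = 0
        · rw [if_pos hj]; linarith
        · rw [if_neg hj]
      · show (0:ℚ) ≤ 2*(m:ℚ) + (i:ℚ) - 1 - 2*sval par
        linarith
      · show (if (j:ℕ) = 0 then (i:ℚ) - 1 else 0) = 0
        by_cases hj0 : (j:ℕ) = 0
        · exfalso
          have hj' : 2*(m:ℚ) + (i:ℚ) - 1 - 2*sval par < ((j:ℕ):ℚ) + 1 := hj
          rw [hj0] at hj'
          push_cast at hj'
          linarith
        · exact if_neg hj0
      · rw [hT1, hT20 ⟨0, by omega⟩ rfl]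
      · ext x
        rw [mem_atypType_iff, mem_S0_iff, ← aux_mem m (sval par) x]
        constructor
        · rintro ⟨hne, j, hj⟩
          by_cases hj0 : (j:ℕ) = 0
          · exfalso
            apply hne
            rw [hT1, ← hj, hT20 j hj0]
          · rw [hT2 j hj0] at hj
            exact ⟨(j:ℕ), by omega, j.isLt, hj.symm⟩
        · rintro ⟨j, hj1, hj2, hjx⟩
          have hjQ : (1:ℚ) ≤ ((j:ℕ):ℚ) := by exact_mod_cast hj1
          refine ⟨?_, ⟨⟨j, hj2⟩, ?_⟩⟩
          · rw [hT1, hjx]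
            intro heq; linarith
          · rw [hT2 ⟨j, hj2⟩ (by simpa using Nat.one_le_iff_ne_zero.mp hj1)]
            exact hjx.symm


end
end
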